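/- arXiv:1412.0786 — 8 statements merged into one kernel-verified Lean document; each statement's English description precedes it below -/
import Mathlib

section
/- Let (A₁,B₁) and (A₂,B₂) be regular matrix pairs of n×n complex matrices (i.e., det(A_i − λB_i) ≢ 0). If the spectra σ(A₁,B₁) and σ(−A₂,B₂) (as generalized eigenvalue spectra, including infinite eigenvalues) are disjoint, then the only solution X ∈ ℂ^{n×n} of the equation A₂XB₁ + B₂XA₁ = 0 is X = 0. -/
open Matrix

/-- The generalized spectrum of a matrix pair `(A, B)`: finite eigenvalues `some λ` with
`det (A - λ B) = 0`, and the infinite eigenvalue `none` when `B` is singular. -/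
def genSpec {m : ℕ} (A B : Matrix (Fin m) (Fin m) ℂ) : Set (Option ℂ) :=
  {x | match x with
    | some lam => (A - lam • B).det = 0
    | none => ¬ IsUnit B.det}

/-- A matrix pair `(A, B)` is regular if `det (A - λ B) ≠ 0` for some `λ ∈ ℂ`. -/
def IsRegularPair {m : ℕ} (A B : Matrix (Fin m) (Fin m) ℂ) : Prop :=
  ∃ lam : ℂ, (A - lam • B).det ≠ 0

open Polynomial in
/-- `λ ↦ det (A - λ B)` is a polynomial function. -/
lemma detPoly_eval {m : ℕ} (A B : Matrix (Fin m) (Fin m) ℂ) (lam : ℂ) :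
    ((A.map C - (X : ℂ[X]) • B.map C).det).eval lam = (A - lam • B).det := by
  rw [← coe_evalRingHom, RingHom.map_det]
  congr 1
  ext i j
  simp only [RingHom.mapMatrix_apply, Matrix.map_apply, Matrix.sub_apply, Matrix.smul_apply,
    smul_eq_mul, coe_evalRingHom, Polynomial.eval_sub, Polynomial.eval_mul, Polynomial.eval_C,
    Polynomial.eval_X]

open Polynomial in
lemma charpoly_eval' {m : ℕ} (M : Matrix (Fin m) (Fin m) ℂ) (r : ℂ) :
    M.charpoly.eval r = (r • (1 : Matrix (Fin m) (Fin m) ℂ) - M).det := by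
  rw [Matrix.charpoly, ← coe_evalRingHom, RingHom.map_det]
  congr 1
  ext i j
  simp [charmatrix_apply, Matrix.map_apply, Matrix.sub_apply, Matrix.smul_apply,
    Matrix.one_apply, Matrix.diagonal_apply, apply_ite (eval r), smul_eq_mul]

lemma pow_comm_aux {m : ℕ} (P Q Y : Matrix (Fin m) (Fin m) ℂ)
    (h : Q * Y = Y * P) (k : ℕ) : Q ^ k * Y = Y * P ^ k := by
  induction k with
  | zero => simp
  | succ k ih =>
    rw [pow_succ, pow_succ, mul_assoc, h, ← mul_assoc, ih, mul_assoc]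

open Polynomial in
lemma aeval_comm_aux {m : ℕ} (P Q Y : Matrix (Fin m) (Fin m) ℂ)
    (h : Q * Y = Y * P) (p : ℂ[X]) :
    (aeval Q p) * Y = Y * (aeval P p) := by
  induction p using Polynomial.induction_on' with
  | add p q hp hq => rw [map_add, map_add, add_mul, mul_add, hp, hq]
  | monomial k a =>
    rw [aeval_monomial, aeval_monomial, mul_assoc, pow_comm_aux P Q Y h k, ← mul_assoc,
      ← mul_assoc]
    congr 1
    rw [Algebra.algebraMap_eq_smul_one, smul_mul_assoc, one_mul, mul_smul_comm, mul_one]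

open Polynomial in
/-- Sylvester-type uniqueness: if `Q Y = Y P` and the spectra of `P` and `Q` are disjoint,
then `Y = 0`. -/
lemma sylvester_aux {m : ℕ} (P Q Y : Matrix (Fin m) (Fin m) ℂ)
    (hspec : ∀ r : ℂ, (P - r • 1).det = 0 → IsUnit (Q - r • 1).det)
    (h : Q * Y = Y * P) : Y = 0 := by
  have hc := aeval_comm_aux P Q Y h P.charpoly
  rw [Matrix.aeval_self_charpoly, mul_zero] at hc
  -- hc : aeval Q P.charpoly * Y = 0
  have hu : IsUnit (aeval Q P.charpoly) := by
    have hsplit := (IsAlgClosed.splits P.charpoly).eq_prod_roots_of_monic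
      P.charpoly_monic
    rw [hsplit, ← Multiset.prod_toList,
      map_list_prod (aeval Q : ℂ[X] →ₐ[ℂ] Matrix (Fin m) (Fin m) ℂ)]
    refine List.prod_isUnit ?_
    intro x hx
    simp only [List.mem_map] at hx
    obtain ⟨q, hq, rfl⟩ := hx
    rw [Multiset.mem_toList, Multiset.mem_map] at hq
    obtain ⟨r, hr, rfl⟩ := hq
    have hroot : P.charpoly.eval r = 0 := (Polynomial.mem_roots'.mp hr).2
    rw [charpoly_eval'] at hroot
    have hdet : (P - r • 1).det = 0 := by
      have hneg : P - r • (1 : Matrix (Fin m) (Fin m) ℂ) = -(r • 1 - P) := by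
        rw [neg_sub]
      rw [hneg, Matrix.det_neg, hroot, mul_zero]
    have hQ := hspec r hdet
    have : (aeval Q) (X - C r) = Q - r • 1 := by
      rw [map_sub, aeval_X, aeval_C, Algebra.algebraMap_eq_smul_one]
    rw [this]
    exact (Matrix.isUnit_iff_isUnit_det _).mpr hQ
  have hud : IsUnit (aeval Q P.charpoly).det := (Matrix.isUnit_iff_isUnit_det _).mp hu
  calc Y = ((aeval Q P.charpoly)⁻¹ * (aeval Q P.charpoly)) * Y := by
        rw [Matrix.nonsing_inv_mul _ hud, one_mul]
    _ = (aeval Q P.charpoly)⁻¹ * ((aeval Q P.charpoly) * Y) := by rw [mul_assoc]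
    _ = 0 := by rw [hc, mul_zero]

/-- If `(A₁,B₁)` and `(A₂,B₂)` are regular pairs with
`σ(A₁,B₁) ∩ σ(−A₂,B₂) = ∅`, then `A₂ X B₁ + B₂ X A₁ = 0` has only the trivial solution. -/
theorem trivial_solution_of_disjoint_spectra {n : ℕ}
    (A₁ B₁ A₂ B₂ : Matrix (Fin n) (Fin n) ℂ)
    (h₁ : IsRegularPair A₁ B₁) (h₂ : IsRegularPair A₂ B₂)
    (hdisj : Disjoint (genSpec A₁ B₁) (genSpec (-A₂) B₂))
    (X : Matrix (Fin n) (Fin n) ℂ)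
    (hX : A₂ * X * B₁ + B₂ * X * A₁ = 0) :
    X = 0 := by
  classical
  -- the disjointness in pointwise form
  have hdisj' : ∀ x, x ∈ genSpec A₁ B₁ → x ∉ genSpec (-A₂) B₂ := by
    intro x hx hx'
    exact Set.disjoint_left.mp hdisj hx hx'
  -- regularity of the pair (-A₂, B₂)
  have h₂' : ∃ lam : ℂ, ((-A₂) - lam • B₂).det ≠ 0 := by
    obtain ⟨lam, hlam⟩ := h₂
    refine ⟨-lam, ?_⟩
    have : (-A₂) - (-lam) • B₂ = -(A₂ - lam • B₂) := by
      module
    rw [this, Matrix.det_neg]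
    intro hc
    rcases mul_eq_zero.mp hc with hc | hc
    · exact pow_ne_zero _ (by norm_num : (-1 : ℂ) ≠ 0) hc
    · exact hlam hc
  -- choose λ with both A₁ - λ B₁ and -A₂ - λ B₂ invertible
  obtain ⟨lam, hlam₁, hlam₂⟩ :
      ∃ lam : ℂ, (A₁ - lam • B₁).det ≠ 0 ∧ ((-A₂) - lam • B₂).det ≠ 0 := by
    set p₁ : Polynomial ℂ :=
      (A₁.map Polynomial.C - (Polynomial.X : Polynomial ℂ) • B₁.map Polynomial.C).det with hp₁
    set p₂ : Polynomial ℂ :=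
      ((-A₂).map Polynomial.C - (Polynomial.X : Polynomial ℂ) • B₂.map Polynomial.C).det with hp₂
    have hp₁ne : p₁ ≠ 0 := by
      obtain ⟨μ, hμ⟩ := h₁
      intro hc
      apply hμ
      rw [← detPoly_eval, ← hp₁, hc, Polynomial.eval_zero]
    have hp₂ne : p₂ ≠ 0 := by
      obtain ⟨μ, hμ⟩ := h₂'
      intro hc
      apply hμ
      rw [← detPoly_eval, ← hp₂, hc, Polynomial.eval_zero]
    have hfin : ({x | Polynomial.IsRoot p₁ x} ∪ {x | Polynomial.IsRoot p₂ x}).Finite :=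
      (Polynomial.finite_setOf_isRoot hp₁ne).union (Polynomial.finite_setOf_isRoot hp₂ne)
    obtain ⟨lam, hlam⟩ := hfin.exists_notMem
    rw [Set.mem_union, not_or] at hlam
    refine ⟨lam, ?_, ?_⟩
    · rw [← detPoly_eval, ← hp₁]; exact hlam.1
    · rw [← detPoly_eval, ← hp₂]; exact hlam.2
  set M₁ := A₁ - lam • B₁ with hM₁
  set M₂ := (-A₂) - lam • B₂ with hM₂
  have hM₁u : IsUnit M₁.det := isUnit_iff_ne_zero.mpr hlam₁
  have hM₂u : IsUnit M₂.det := isUnit_iff_ne_zero.mpr hlam₂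
  -- rewrite the equation as M₂ X B₁ = B₂ X M₁
  have key : M₂ * X * B₁ = B₂ * X * M₁ := by
    have h1 : A₂ * X * B₁ = -(B₂ * X * A₁) := by
      rw [← neg_eq_of_add_eq_zero_left hX]
    rw [hM₁, hM₂]
    rw [Matrix.sub_mul, Matrix.sub_mul, Matrix.neg_mul, Matrix.neg_mul, Matrix.smul_mul,
      Matrix.smul_mul, Matrix.mul_sub, Matrix.mul_smul, h1]
    abel
  -- set P, Q and derive Q X = X P
  set P := B₁ * M₁⁻¹ with hP
  set Q := M₂⁻¹ * B₂ with hQ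
  have hQXP : Q * X = X * P := by
    have : M₂⁻¹ * (M₂ * X * B₁) * M₁⁻¹ = M₂⁻¹ * (B₂ * X * M₁) * M₁⁻¹ := by rw [key]
    calc Q * X = M₂⁻¹ * (B₂ * X * M₁) * M₁⁻¹ := by
          rw [hQ, mul_assoc (M₂⁻¹) _ _, mul_assoc (M₂⁻¹) _ _, mul_assoc,
            Matrix.mul_nonsing_inv _ hM₁u, mul_one]
      _ = M₂⁻¹ * (M₂ * X * B₁) * M₁⁻¹ := by rw [key]
      _ = X * P := by
          rw [hP, ← mul_assoc, ← mul_assoc, ← mul_assoc, Matrix.nonsing_inv_mul _ hM₂u,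
            one_mul, mul_assoc]
  -- the spectral disjointness for P and Q
  have hspec : ∀ r : ℂ, (P - r • 1).det = 0 → IsUnit (Q - r • 1).det := by
    intro r hr
    -- det (P - r•1) = det (B₁ - r•M₁) * det M₁⁻¹
    have hPfact : P - r • (1 : Matrix (Fin n) (Fin n) ℂ) = (B₁ - r • M₁) * M₁⁻¹ := by
      rw [Matrix.sub_mul, Matrix.smul_mul, Matrix.mul_nonsing_inv _ hM₁u, hP]
    have hQfact : Q - r • (1 : Matrix (Fin n) (Fin n) ℂ) = M₂⁻¹ * (B₂ - r • M₂) := by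
      rw [Matrix.mul_sub, Matrix.mul_smul, Matrix.nonsing_inv_mul _ hM₂u, hQ]
    have hB₁det : (B₁ - r • M₁).det = 0 := by
      rw [hPfact, Matrix.det_mul] at hr
      rcases mul_eq_zero.mp hr with hc | hc
      · exact hc
      · exact absurd hc (Matrix.isUnit_nonsing_inv_det _ hM₁u).ne_zero
    -- it suffices to show det (B₂ - r•M₂) ≠ 0
    suffices hB₂det : (B₂ - r • M₂).det ≠ 0 by
      rw [hQfact, Matrix.det_mul]
      exact isUnit_iff_ne_zero.mpr
        (mul_ne_zero (Matrix.isUnit_nonsing_inv_det _ hM₂u).ne_zero hB₂det)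
    by_cases hr0 : r = 0
    · -- infinite eigenvalue case
      subst hr0
      simp only [zero_smul, sub_zero] at hB₁det ⊢
      have hmem : (none : Option ℂ) ∈ genSpec A₁ B₁ := by
        simp only [genSpec, Set.mem_setOf_eq]
        rw [isUnit_iff_ne_zero, not_not]
        exact hB₁det
      have := hdisj' none hmem
      simp only [genSpec, Set.mem_setOf_eq, isUnit_iff_ne_zero, not_not] at this
      exact this
    · -- finite eigenvalue case : μ = λ + 1/r
      set μ := lam + r⁻¹ with hμ
      have hfact₁ : B₁ - r • M₁ = (-r) • (A₁ - μ • B₁) := by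
        rw [hM₁, hμ]
        ext i j
        simp only [Matrix.sub_apply, Matrix.smul_apply, smul_eq_mul]
        field_simp
        ring
      have hfact₂ : B₂ - r • M₂ = (-r) • ((-A₂) - μ • B₂) := by
        rw [hM₂, hμ]
        ext i j
        simp only [Matrix.sub_apply, Matrix.smul_apply, Matrix.neg_apply, smul_eq_mul]
        field_simp
        ring
      have hA₁det : (A₁ - μ • B₁).det = 0 := by
        rw [hfact₁, Matrix.det_smul] at hB₁det
        rcases mul_eq_zero.mp hB₁det with hc | hc
        · exact absurd hc (pow_ne_zero _ (neg_ne_zero.mpr hr0))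
        · exact hc
      have hmem : (some μ) ∈ genSpec A₁ B₁ := hA₁det
      have hnot := hdisj' (some μ) hmem
      have hA₂det : ((-A₂) - μ • B₂).det ≠ 0 := by
        intro hc
        exact hnot hc
      rw [hfact₂, Matrix.det_smul]
      exact mul_ne_zero (pow_ne_zero _ (neg_ne_zero.mpr hr0)) hA₂det
  exact sylvester_aux P Q X hspec hQXP
end

section
/- Let (M,L) be a regular Hamiltonian pair of 2n×2n complex matrices, i.e., M J L^H = −L J M^H where J = [[0, I_n],[−I_n, 0]]. Suppose U₁ ∈ ℂ^{2n×r₁}, U₂ ∈ ℂ^{2n×r₂} have full column rank, (R₁,T₁) and (R₂,T₂) are regular pairs, M U₁ T₁ = L U₁ R₁ and M U₂ T₂ = L U₂ R₂. If σ(R₁,T₁) ∩ σ(−R₂^H, T₂^H) = ∅, then U₂^H J U₁ = 0. -/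
open Matrix

/-- The matrix `J = [[0, Iₙ], [−Iₙ, 0]]`. -/
def Jmat (n : ℕ) : Matrix (Fin n ⊕ Fin n) (Fin n ⊕ Fin n) ℂ :=
  Matrix.fromBlocks 0 1 (-1) 0

/-! ### Auxiliary lemmas -/

lemma Jmat_mul_Jmat (n : ℕ) : Jmat n * Jmat n = -1 := by
  rw [Jmat, Matrix.fromBlocks_multiply, ← Matrix.fromBlocks_one, Matrix.fromBlocks_neg]
  simp

lemma Jmat_conjTranspose (n : ℕ) : (Jmat n)ᴴ = -(Jmat n) := by
  rw [Jmat, Matrix.fromBlocks_conjTranspose, Matrix.fromBlocks_neg]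
  simp

lemma finite_bad {m : Type*} [Fintype m] [DecidableEq m] (A B : Matrix m m ℂ)
    (h : ∃ lam : ℂ, (A - lam • B).det ≠ 0) :
    {z : ℂ | (Complex.I • A + z • B).det = 0}.Finite := by
  obtain ⟨lam, hlam⟩ := h
  have hev : ∀ z : ℂ,
      (((Complex.I • A).map Polynomial.C +
        (Polynomial.X : Polynomial ℂ) • B.map Polynomial.C).det).eval z
      = (Complex.I • A + z • B).det := by
    intro z
    rw [← Polynomial.coe_evalRingHom, RingHom.map_det]
    congr 1
    ext i j
    simp only [RingHom.mapMatrix_apply, Matrix.map_apply, Matrix.add_apply, Matrix.smul_apply,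
      Polynomial.coe_evalRingHom, smul_eq_mul, Polynomial.eval_add, Polynomial.eval_mul,
      Polynomial.eval_C, Polynomial.eval_X]
  set p : Polynomial ℂ :=
    ((Complex.I • A).map Polynomial.C + (Polynomial.X : Polynomial ℂ) • B.map Polynomial.C).det
  have hpne : p ≠ 0 := by
    intro h0
    have h1 : p.eval (-(Complex.I * lam)) = 0 := by rw [h0]; simp
    rw [hev] at h1
    have h2 : Complex.I • A + (-(Complex.I * lam)) • B = Complex.I • (A - lam • B) := by
      rw [smul_sub, smul_smul]
      module
    rw [h2, Matrix.det_smul] at h1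
    rcases mul_eq_zero.mp h1 with h3 | h3
    · exact pow_ne_zero _ Complex.I_ne_zero h3
    · exact hlam h3
  have hss : {z : ℂ | (Complex.I • A + z • B).det = 0} = {z : ℂ | p.IsRoot z} := by
    ext z; simp only [Set.mem_setOf_eq, Polynomial.IsRoot, hev]
  rw [hss]
  exact p.finite_setOf_isRoot hpne

lemma exists_good_d {m a b : Type*} [Fintype m] [DecidableEq m] [Fintype a] [DecidableEq a]
    [Fintype b] [DecidableEq b] (M L : Matrix m m ℂ)
    (R₁ T₁ : Matrix a a ℂ) (R₂ T₂ : Matrix b b ℂ)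
    (h0 : ∃ lam : ℂ, (M - lam • L).det ≠ 0)
    (h1 : ∃ lam : ℂ, (R₁ - lam • T₁).det ≠ 0)
    (h2 : ∃ lam : ℂ, (R₂ - lam • T₂).det ≠ 0) :
    ∃ d : ℝ, (d : ℂ) ≠ 0 ∧ (Complex.I • M + (d:ℂ) • L).det ≠ 0 ∧
      (Complex.I • R₁ + (d:ℂ) • T₁).det ≠ 0 ∧ (Complex.I • R₂ + (d:ℂ) • T₂).det ≠ 0 := by
  have hfin : ({z : ℂ | (Complex.I • M + z • L).det = 0} ∪
      {z : ℂ | (Complex.I • R₁ + z • T₁).det = 0} ∪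
      {z : ℂ | (Complex.I • R₂ + z • T₂).det = 0} ∪ {(0:ℂ)}).Finite :=
    (((finite_bad M L h0).union (finite_bad R₁ T₁ h1)).union
      (finite_bad R₂ T₂ h2)).union (Set.finite_singleton 0)
  have hpre : ((fun d : ℝ => (d : ℂ)) ⁻¹' ({z : ℂ | (Complex.I • M + z • L).det = 0} ∪
      {z : ℂ | (Complex.I • R₁ + z • T₁).det = 0} ∪
      {z : ℂ | (Complex.I • R₂ + z • T₂).det = 0} ∪ {(0:ℂ)})).Finite :=
    hfin.preimage (Function.Injective.injOn Complex.ofReal_injective)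
  obtain ⟨d, hd⟩ := hpre.infinite_compl.nonempty
  simp only [Set.mem_compl_iff, Set.mem_preimage, Set.mem_union, Set.mem_setOf_eq,
    Set.mem_singleton_iff, not_or] at hd
  exact ⟨d, hd.2, hd.1.1.1, hd.1.1.2, hd.1.2⟩

lemma charpoly_eval_eq {a : ℕ} (P : Matrix (Fin a) (Fin a) ℂ) (z : ℂ) :
    P.charpoly.eval z = (z • (1 : Matrix (Fin a) (Fin a) ℂ) - P).det := by
  rw [Matrix.charpoly, ← Polynomial.coe_evalRingHom, RingHom.map_det]
  congr 1
  ext i j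
  by_cases h : i = j <;>
    simp [Matrix.charmatrix_apply, Matrix.map_apply, h, Matrix.one_apply,
      Matrix.diagonal_apply]

lemma sylvester_unique {a b : ℕ} (P : Matrix (Fin a) (Fin a) ℂ) (Q : Matrix (Fin b) (Fin b) ℂ)
    (X : Matrix (Fin b) (Fin a) ℂ) (hcomm : X * P = Q * X)
    (hspec : ∀ z : ℂ, (P - z • 1).det = 0 → (Q - z • 1).det ≠ 0) : X = 0 := by
  have hpow : ∀ k : ℕ, X * P ^ k = Q ^ k * X := by
    intro k
    induction k with
    | zero => simp
    | succ k ih =>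
      rw [pow_succ, pow_succ, ← Matrix.mul_assoc, ih, Matrix.mul_assoc, hcomm,
        ← Matrix.mul_assoc]
  have hpoly : ∀ f : Polynomial ℂ, X * Polynomial.aeval P f = Polynomial.aeval Q f * X := by
    intro f
    induction f using Polynomial.induction_on' with
    | add p q hp hq => rw [map_add, map_add, Matrix.mul_add, Matrix.add_mul, hp, hq]
    | monomial k c =>
      rw [Polynomial.aeval_monomial, Polynomial.aeval_monomial,
        Algebra.algebraMap_eq_smul_one, Algebra.algebraMap_eq_smul_one,
        smul_mul_assoc, smul_mul_assoc, one_mul, one_mul, Matrix.mul_smul,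
        Matrix.smul_mul, hpow]
  have hzero : Polynomial.aeval Q P.charpoly * X = 0 := by
    rw [← hpoly, Matrix.aeval_self_charpoly, Matrix.mul_zero]
  have hunit : IsUnit (Polynomial.aeval Q P.charpoly) := by
    have hsplit : P.charpoly =
        (P.charpoly.roots.map fun r => Polynomial.X - Polynomial.C r).prod :=
      Polynomial.Splits.eq_prod_roots_of_monic (IsAlgClosed.splits _) P.charpoly_monic
    rw [hsplit, ← Multiset.prod_toList, map_list_prod]
    apply List.prod_isUnit
    intro x hx
    rw [List.mem_map] at hx
    obtain ⟨f, hf, rfl⟩ := hx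
    rw [Multiset.mem_toList, Multiset.mem_map] at hf
    obtain ⟨r, hr, rfl⟩ := hf
    simp only [map_sub, Polynomial.aeval_X, Polynomial.aeval_C]
    rw [Algebra.algebraMap_eq_smul_one, Matrix.isUnit_iff_isUnit_det, isUnit_iff_ne_zero]
    have hroot : (P - r • 1).det = 0 := by
      have h1 : P.charpoly.eval r = 0 := (Polynomial.mem_roots'.mp hr).2
      rw [charpoly_eval_eq] at h1
      have h2 : P - r • 1 = -(r • 1 - P) := by abel
      rw [h2, Matrix.det_neg, h1, mul_zero]
    exact hspec r hroot
  obtain ⟨u, hu⟩ := hunit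
  have h6 : X = (↑u⁻¹ : Matrix (Fin b) (Fin b) ℂ) * (Polynomial.aeval Q P.charpoly * X) := by
    rw [← Matrix.mul_assoc, ← hu, Units.inv_mul, Matrix.one_mul]
  rw [h6, hzero, Matrix.mul_zero]

/-- Theorem 2.2 (i): if `(M, L)` is a regular Hamiltonian pair, `U₁, U₂` are of full column
rank with `M U₁ T₁ = L U₁ R₁`, `M U₂ T₂ = L U₂ R₂`, `(R₁,T₁)` and `(R₂,T₂)` regular pairs, and
`σ(R₁,T₁) ∩ σ(−R₂ᴴ,T₂ᴴ) = ∅`, then `U₁` and `U₂` are `J`-orthogonal: `U₂ᴴ J U₁ = 0`. -/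
theorem hamiltonian_pair_J_orthogonal {n r₁ r₂ : ℕ}
    (M L : Matrix (Fin n ⊕ Fin n) (Fin n ⊕ Fin n) ℂ)
    (hreg : ∃ lam : ℂ, (M - lam • L).det ≠ 0)
    (hham : M * Jmat n * Lᴴ = -(L * Jmat n * Mᴴ))
    (U₁ : Matrix (Fin n ⊕ Fin n) (Fin r₁) ℂ) (U₂ : Matrix (Fin n ⊕ Fin n) (Fin r₂) ℂ)
    (hU₁ : U₁.rank = r₁) (hU₂ : U₂.rank = r₂)
    (R₁ T₁ : Matrix (Fin r₁) (Fin r₁) ℂ) (R₂ T₂ : Matrix (Fin r₂) (Fin r₂) ℂ)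
    (hreg₁ : IsRegularPair R₁ T₁) (hreg₂ : IsRegularPair R₂ T₂)
    (heq₁ : M * U₁ * T₁ = L * U₁ * R₁) (heq₂ : M * U₂ * T₂ = L * U₂ * R₂)
    (hdisj : Disjoint (genSpec R₁ T₁) (genSpec (-R₂ᴴ) T₂ᴴ)) :
    U₂ᴴ * Jmat n * U₁ = 0 := by
  classical
  obtain ⟨d, hd0, hdL', hdT₁', hdT₂'⟩ := exists_good_d M L R₁ T₁ R₂ T₂ hreg hreg₁ hreg₂
  set J := Jmat n with hJdef
  have hJ2 : J * J = -1 := Jmat_mul_Jmat n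
  obtain ⟨L', hL'⟩ : ∃ E, E = Complex.I • M + (d:ℂ) • L := ⟨_, rfl⟩
  obtain ⟨T₁', hT₁'⟩ : ∃ E, E = Complex.I • R₁ + (d:ℂ) • T₁ := ⟨_, rfl⟩
  obtain ⟨T₂', hT₂'⟩ : ∃ E, E = Complex.I • R₂ + (d:ℂ) • T₂ := ⟨_, rfl⟩
  rw [← hL'] at hdL'
  rw [← hT₁'] at hdT₁'
  rw [← hT₂'] at hdT₂'
  have hL'unit : IsUnit L'.det := isUnit_iff_ne_zero.mpr hdL'
  have hT₁'unit : IsUnit T₁'.det := isUnit_iff_ne_zero.mpr hdT₁'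
  have hT₂'Hunit : IsUnit (T₂'ᴴ).det := by
    rw [Matrix.det_conjTranspose]
    exact isUnit_iff_ne_zero.mpr (star_ne_zero.mpr hdT₂')
  have hL'Hunit : IsUnit (L'ᴴ).det := by
    rw [Matrix.det_conjTranspose]
    exact isUnit_iff_ne_zero.mpr (star_ne_zero.mpr hdL')
  have hinvL' : L'⁻¹ * L' = 1 := Matrix.nonsing_inv_mul L' hL'unit
  -- the Hamiltonian identity for the modified pair (M, L')
  have hham0 : M * J * Lᴴ + L * J * Mᴴ = 0 := by rw [hham]; abel
  have hham' : M * J * L'ᴴ + L' * J * Mᴴ = 0 := by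
    have expand : M * J * L'ᴴ + L' * J * Mᴴ = (d:ℂ) • (M * J * Lᴴ + L * J * Mᴴ) := by
      rw [hL', conjTranspose_add, conjTranspose_smul, conjTranspose_smul]
      simp only [Complex.star_def, Complex.conj_I, Complex.conj_ofReal]
      simp only [Matrix.mul_add, Matrix.add_mul, Matrix.mul_smul, Matrix.smul_mul]
      module
    rw [expand, hham0, smul_zero]
  obtain ⟨H, hH⟩ : ∃ E, E = L'⁻¹ * M := ⟨_, rfl⟩
  have hHconj : Hᴴ = Mᴴ * (L'ᴴ)⁻¹ := by
    rw [hH, conjTranspose_mul, Matrix.conjTranspose_nonsing_inv]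
  have h1 : H * J * L'ᴴ = -(J * Mᴴ) := by
    have hMJL' : M * J * L'ᴴ = -(L' * J * Mᴴ) := by
      rw [eq_neg_iff_add_eq_zero]; exact hham'
    calc H * J * L'ᴴ = L'⁻¹ * (M * (J * L'ᴴ)) := by rw [hH]; simp only [Matrix.mul_assoc]
      _ = L'⁻¹ * (M * J * L'ᴴ) := by simp only [Matrix.mul_assoc]
      _ = L'⁻¹ * -(L' * J * Mᴴ) := by rw [hMJL']
      _ = -((L'⁻¹ * L') * (J * Mᴴ)) := by
          simp only [Matrix.mul_neg, Matrix.mul_assoc]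
      _ = -(J * Mᴴ) := by rw [hinvL', Matrix.one_mul]
  have hHJ : H * J = -(J * Hᴴ) := by
    calc H * J = H * J * (L'ᴴ * (L'ᴴ)⁻¹) := by
          rw [Matrix.mul_nonsing_inv _ hL'Hunit, Matrix.mul_one]
      _ = H * J * L'ᴴ * (L'ᴴ)⁻¹ := by simp only [Matrix.mul_assoc]
      _ = -(J * Mᴴ) * (L'ᴴ)⁻¹ := by rw [h1]
      _ = -(J * Hᴴ) := by rw [hHconj]; simp only [Matrix.neg_mul, Matrix.mul_assoc]
  have hJH2 : J * H = -(Hᴴ * J) := by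
    have h2 : J * (H * J) = J * -(J * Hᴴ) := by rw [hHJ]
    have h3 : J * -(J * Hᴴ) = Hᴴ := by
      rw [Matrix.mul_neg, ← Matrix.mul_assoc, hJ2, Matrix.neg_mul, neg_neg, Matrix.one_mul]
    have h4 : J * H * J = Hᴴ := by rw [Matrix.mul_assoc, h2, h3]
    have h5 : J * H * (J * J) = Hᴴ * J := by rw [← Matrix.mul_assoc, h4]
    rw [hJ2, Matrix.mul_neg, Matrix.mul_one] at h5
    exact neg_eq_iff_eq_neg.mp h5
  have hJH3 : ∀ (A : Matrix (Fin n ⊕ Fin n) (Fin r₁) ℂ),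
      J * (H * A) = -(Hᴴ * (J * A)) := by
    intro A
    rw [← Matrix.mul_assoc, hJH2, Matrix.neg_mul, Matrix.mul_assoc]
  -- deflating relations for H
  have hHU₁ : H * (U₁ * T₁') = U₁ * R₁ := by
    have hMU₁ : M * (U₁ * T₁') = L' * (U₁ * R₁) := by
      rw [hL', hT₁']
      simp only [Matrix.mul_add, Matrix.add_mul, Matrix.mul_smul, Matrix.smul_mul,
        ← Matrix.mul_assoc, heq₁]
    rw [hH, Matrix.mul_assoc, hMU₁, ← Matrix.mul_assoc, hinvL', Matrix.one_mul]
  have hHU₂ : H * (U₂ * T₂') = U₂ * R₂ := by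
    have hMU₂ : M * (U₂ * T₂') = L' * (U₂ * R₂) := by
      rw [hL', hT₂']
      simp only [Matrix.mul_add, Matrix.add_mul, Matrix.mul_smul, Matrix.smul_mul,
        ← Matrix.mul_assoc, heq₂]
    rw [hH, Matrix.mul_assoc, hMU₂, ← Matrix.mul_assoc, hinvL', Matrix.one_mul]
  have hHU₂c : T₂'ᴴ * (U₂ᴴ * Hᴴ) = R₂ᴴ * U₂ᴴ := by
    have h := congrArg conjTranspose hHU₂
    simpa only [conjTranspose_mul, Matrix.mul_assoc] using h
  obtain ⟨X, hX⟩ : ∃ E, E = U₂ᴴ * J * U₁ := ⟨_, rfl⟩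
  -- the generalized Sylvester relation
  have key : T₂'ᴴ * (U₂ᴴ * (J * (U₁ * R₁))) = -(R₂ᴴ * (U₂ᴴ * (J * (U₁ * T₁')))) := by
    calc T₂'ᴴ * (U₂ᴴ * (J * (U₁ * R₁)))
        = T₂'ᴴ * (U₂ᴴ * (J * (H * (U₁ * T₁')))) := by rw [hHU₁]
      _ = T₂'ᴴ * (U₂ᴴ * -(Hᴴ * (J * (U₁ * T₁')))) := by rw [hJH3]
      _ = -((T₂'ᴴ * (U₂ᴴ * Hᴴ)) * (J * (U₁ * T₁'))) := by
          simp only [Matrix.mul_neg, Matrix.mul_assoc]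
      _ = -((R₂ᴴ * U₂ᴴ) * (J * (U₁ * T₁'))) := by rw [hHU₂c]
      _ = -(R₂ᴴ * (U₂ᴴ * (J * (U₁ * T₁')))) := by simp only [Matrix.mul_assoc]
  obtain ⟨P, hP⟩ : ∃ E, E = R₁ * T₁'⁻¹ := ⟨_, rfl⟩
  obtain ⟨Q, hQ⟩ : ∃ E, E = -((T₂'ᴴ)⁻¹ * R₂ᴴ) := ⟨_, rfl⟩
  have e0 : T₂'ᴴ * (X * R₁) = -(R₂ᴴ * (X * T₁')) := by
    rw [hX]
    simpa only [Matrix.mul_assoc] using key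
  have hcomm : X * P = Q * X := by
    have e1 : T₂'ᴴ * (X * P) = -(R₂ᴴ * X) := by
      calc T₂'ᴴ * (X * P) = (T₂'ᴴ * (X * R₁)) * T₁'⁻¹ := by
            rw [hP]; simp only [Matrix.mul_assoc]
        _ = -((R₂ᴴ * (X * T₁')) * T₁'⁻¹) := by rw [e0, Matrix.neg_mul]
        _ = -(R₂ᴴ * (X * (T₁' * T₁'⁻¹))) := by simp only [Matrix.mul_assoc]
        _ = -(R₂ᴴ * X) := by rw [Matrix.mul_nonsing_inv _ hT₁'unit, Matrix.mul_one]
    calc X * P = (1 : Matrix (Fin r₂) (Fin r₂) ℂ) * (X * P) := by rw [Matrix.one_mul]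
      _ = ((T₂'ᴴ)⁻¹ * T₂'ᴴ) * (X * P) := by rw [Matrix.nonsing_inv_mul _ hT₂'Hunit]
      _ = (T₂'ᴴ)⁻¹ * (T₂'ᴴ * (X * P)) := by rw [Matrix.mul_assoc]
      _ = (T₂'ᴴ)⁻¹ * -(R₂ᴴ * X) := by rw [e1]
      _ = Q * X := by
          rw [hQ]; simp only [Matrix.mul_neg, Matrix.neg_mul, Matrix.mul_assoc]
  -- the spectra of P and Q are disjoint
  have hspec : ∀ z : ℂ, (P - z • 1).det = 0 → (Q - z • 1).det ≠ 0 := by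
    intro z hPz hQz
    have hR1 : (R₁ - z • T₁').det = 0 := by
      have e1 : P - z • 1 = (R₁ - z • T₁') * T₁'⁻¹ := by
        rw [hP, Matrix.sub_mul, Matrix.smul_mul, Matrix.mul_nonsing_inv _ hT₁'unit]
      rw [e1, Matrix.det_mul] at hPz
      rcases mul_eq_zero.mp hPz with h | h
      · exact h
      · exact absurd h (isUnit_iff_ne_zero.mp (Matrix.isUnit_nonsing_inv_det _ hT₁'unit))
    obtain ⟨w, hw⟩ : ∃ w : ℂ, w = (starRingEnd ℂ) z := ⟨_, rfl⟩
    have hR2 : (R₂ + w • T₂').det = 0 := by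
      have e1 : Q - z • 1 = -((T₂'ᴴ)⁻¹ * (R₂ᴴ + z • T₂'ᴴ)) := by
        rw [hQ, Matrix.mul_add, Matrix.mul_smul, Matrix.nonsing_inv_mul _ hT₂'Hunit, neg_add]
        abel
      rw [e1, Matrix.det_neg, Matrix.det_mul] at hQz
      have h2 : (R₂ᴴ + z • T₂'ᴴ).det = 0 := by
        rcases mul_eq_zero.mp hQz with h | h
        · exact absurd h (pow_ne_zero _ (by norm_num : (-1:ℂ) ≠ 0))
        rcases mul_eq_zero.mp h with h | h
        · exact absurd h (isUnit_iff_ne_zero.mp (Matrix.isUnit_nonsing_inv_det _ hT₂'Hunit))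
        · exact h
      have e2 : R₂ᴴ + z • T₂'ᴴ = (R₂ + w • T₂')ᴴ := by
        rw [conjTranspose_add, conjTranspose_smul, hw]
        simp [Complex.star_def]
      rw [e2, Matrix.det_conjTranspose, star_eq_zero] at h2
      exact h2
    have lin1 : R₁ - z • T₁' = (1 - z * Complex.I) • R₁ - (z * d) • T₁ := by
      rw [hT₁']
      simp only [smul_add, smul_smul, sub_smul, one_smul]
      abel
    have lin2 : R₂ + w • T₂' = (1 + w * Complex.I) • R₂ + (w * d) • T₂ := by
      rw [hT₂']
      simp only [smul_add, smul_smul, add_smul, one_smul]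
      abel
    have hconj1 : (1 : ℂ) + w * Complex.I = (starRingEnd ℂ) (1 - z * Complex.I) := by
      rw [hw, _root_.map_sub, _root_.map_mul, _root_.map_one, Complex.conj_I]
      ring
    by_cases hc : (1 : ℂ) - z * Complex.I = 0
    · -- the "infinite eigenvalue" case
      have hz0 : z ≠ 0 := by
        intro h; rw [h] at hc; simp at hc
      have hT1 : T₁.det = 0 := by
        rw [lin1, hc, zero_smul, zero_sub, Matrix.det_neg, Matrix.det_smul] at hR1
        rcases mul_eq_zero.mp hR1 with h | h
        · exact absurd h (pow_ne_zero _ (by norm_num : (-1:ℂ) ≠ 0))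
        rcases mul_eq_zero.mp h with h | h
        · exact absurd h (pow_ne_zero _ (mul_ne_zero hz0 hd0))
        · exact h
      have hcw : (1 : ℂ) + w * Complex.I = 0 := by rw [hconj1, hc, map_zero]
      have hw0 : w ≠ 0 := by
        rw [hw, ← Complex.star_def]
        exact star_ne_zero.mpr hz0
      have hT2 : T₂.det = 0 := by
        rw [lin2, hcw, zero_smul, zero_add, Matrix.det_smul] at hR2
        rcases mul_eq_zero.mp hR2 with h | h
        · exact absurd h (pow_ne_zero _ (mul_ne_zero hw0 hd0))
        · exact h
      have m1 : (none : Option ℂ) ∈ genSpec R₁ T₁ := by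
        simp only [genSpec, Set.mem_setOf_eq, isUnit_iff_ne_zero, not_not]
        exact hT1
      have m2 : (none : Option ℂ) ∈ genSpec (-R₂ᴴ) T₂ᴴ := by
        simp only [genSpec, Set.mem_setOf_eq, isUnit_iff_ne_zero, not_not]
        rw [Matrix.det_conjTranspose, hT2, star_zero]
      exact Set.disjoint_left.mp hdisj m1 m2
    · -- the finite eigenvalue case
      obtain ⟨μ, hμ⟩ : ∃ μ : ℂ, μ = z * d / (1 - z * Complex.I) := ⟨_, rfl⟩
      have hcμ : (1 - z * Complex.I) * μ = z * d := by
        rw [hμ]; field_simp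
      have hdet1 : (R₁ - μ • T₁).det = 0 := by
        have e1 : R₁ - z • T₁' = (1 - z * Complex.I) • (R₁ - μ • T₁) := by
          rw [lin1, smul_sub, smul_smul, hcμ]
        rw [e1, Matrix.det_smul] at hR1
        rcases mul_eq_zero.mp hR1 with h | h
        · exact absurd h (pow_ne_zero _ hc)
        · exact h
      have m1 : (some μ : Option ℂ) ∈ genSpec R₁ T₁ := by
        simp only [genSpec, Set.mem_setOf_eq]
        exact hdet1
      have hν : (starRingEnd ℂ) (1 - z * Complex.I) * (starRingEnd ℂ) μ = w * d := by
        rw [← _root_.map_mul (starRingEnd ℂ), hcμ, _root_.map_mul, Complex.conj_ofReal, hw]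
      have hdet2 : (R₂ + (starRingEnd ℂ) μ • T₂).det = 0 := by
        have e1 : R₂ + w • T₂' =
            (starRingEnd ℂ) (1 - z * Complex.I) • (R₂ + (starRingEnd ℂ) μ • T₂) := by
          rw [lin2, hconj1, smul_add, smul_smul, hν]
        rw [e1, Matrix.det_smul] at hR2
        have hcbar : (starRingEnd ℂ) (1 - z * Complex.I) ≠ 0 := by
          intro h
          apply hc
          have h' := congrArg (starRingEnd ℂ) h
          simpa [sub_eq_add_neg] using h'
        rcases mul_eq_zero.mp hR2 with h | h
        · exact absurd h (pow_ne_zero _ hcbar)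
        · exact h
      have m2 : (some μ : Option ℂ) ∈ genSpec (-R₂ᴴ) T₂ᴴ := by
        have e2 : -R₂ᴴ - μ • T₂ᴴ = -((R₂ + (starRingEnd ℂ) μ • T₂)ᴴ) := by
          rw [conjTranspose_add, conjTranspose_smul]
          simp only [Complex.star_def, Complex.conj_conj]
          abel
        have h2 : (-R₂ᴴ - μ • T₂ᴴ).det = 0 := by
          rw [e2, Matrix.det_neg, Matrix.det_conjTranspose, hdet2, star_zero, mul_zero]
        simp only [genSpec, Set.mem_setOf_eq]
        exact h2
      exact Set.disjoint_left.mp hdisj m1 m2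
  suffices hXz : X = 0 by rwa [hX] at hXz
  exact sylvester_unique P Q X hcomm hspec
end

section
/- Let (M,L) be a regular symplectic pair of 2n×2n complex matrices, i.e., M J M^H = L J L^H with J = [[0, I_n],[−I_n, 0]]. Suppose U₁ ∈ ℂ^{2n×r₁}, U₂ ∈ ℂ^{2n×r₂} have full column rank, (R₁,T₁) and (R₂,T₂) are regular pairs, M U₁ T₁ = L U₁ R₁ and M U₂ T₂ = L U₂ R₂. If σ(R₁,T₁) ∩ σ(T₂^H, R₂^H) = ∅, then U₂^H J U₁ = 0. -/
open Matrix

open Polynomial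

noncomputable def pdet {m : Type*} [Fintype m] [DecidableEq m] (A B : Matrix m m ℂ) : Polynomial ℂ :=
  ((C : ℂ →+* Polynomial ℂ).mapMatrix A - (X : Polynomial ℂ) • (C : ℂ →+* Polynomial ℂ).mapMatrix B).det

lemma pdet_eval {m : Type*} [Fintype m] [DecidableEq m] (A B : Matrix m m ℂ) (z : ℂ) :
    (pdet A B).eval z = (A - z • B).det := by
  rw [pdet, ← coe_evalRingHom, RingHom.map_det]
  congr 1
  ext i j
  simp only [RingHom.mapMatrix_apply, Matrix.map_apply, Matrix.sub_apply, Matrix.smul_apply,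
    smul_eq_mul, coe_evalRingHom, eval_sub, eval_mul, eval_C, eval_X]

lemma pdet_swap {m : Type*} [Fintype m] [DecidableEq m] (A B : Matrix m m ℂ) (h : pdet A B ≠ 0) : pdet B A ≠ 0 := by
  intro h0
  apply h
  apply Polynomial.eq_zero_of_infinite_isRoot
  apply Set.Infinite.mono (s := {z : ℂ | z ≠ 0})
  · intro z hz
    have hz : z ≠ 0 := hz
    have h1 : (B - z⁻¹ • A).det = 0 := by
      have := pdet_eval B A z⁻¹; rw [h0, eval_zero] at this; exact this.symm
    show (pdet A B).IsRoot z
    rw [Polynomial.IsRoot, pdet_eval]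
    have e : A - z • B = (-z) • (B - z⁻¹ • A) := by
      match_scalars <;> field_simp
    rw [e, det_smul, h1, mul_zero]
  · have : ({0} : Set ℂ).Finite := Set.finite_singleton 0
    exact this.infinite_compl


lemma pdet_conjT_aux {m : Type*} [Fintype m] [DecidableEq m] (A B : Matrix m m ℂ)
    (h : ∀ z : ℂ, (Aᴴ - z • Bᴴ).det = 0) (w : ℂ) : (A - w • B).det = 0 := by
  have h2 := h (star w)
  have e : (A - w • B)ᴴ = Aᴴ - star w • Bᴴ := by
    rw [conjTranspose_sub, conjTranspose_smul]
  have : star ((A - w • B).det) = 0 := by rw [← det_conjTranspose, e, h2]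
  simpa using this

lemma eval_charpoly' {m : Type*} [Fintype m] [DecidableEq m] (A : Matrix m m ℂ) (x : ℂ) :
    A.charpoly.eval x = (x • (1 : Matrix m m ℂ) - A).det := by
  rw [Matrix.charpoly, ← coe_evalRingHom, RingHom.map_det]
  congr 1
  ext i j
  by_cases h : i = j
  · subst h
    simp [charmatrix_apply, Matrix.map_apply, Matrix.one_apply, Matrix.smul_apply,
      Matrix.sub_apply, coe_evalRingHom]
  · simp [charmatrix_apply, Matrix.map_apply, Matrix.one_apply, Matrix.smul_apply,
      Matrix.sub_apply, Matrix.diagonal_apply, h, coe_evalRingHom]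

lemma sylvester_zero {a b : Type*} [Fintype a] [DecidableEq a] [Fintype b] [DecidableEq b]
    (A : Matrix a a ℂ) (B : Matrix b b ℂ)
    (Y : Matrix a b ℂ) (hAX : A * Y = Y * B)
    (hdet : ∀ μ : ℂ, (A - μ • 1).det = 0 → (B - μ • 1).det ≠ 0) : Y = 0 := by
  have hpow : ∀ k : ℕ, A ^ k * Y = Y * B ^ k := by
    intro k; induction k with
    | zero => simp
    | succ k ih =>
      rw [pow_succ, pow_succ, Matrix.mul_assoc, hAX, ← Matrix.mul_assoc, ih, Matrix.mul_assoc]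
  have haeval : ∀ p : Polynomial ℂ, (Polynomial.aeval A p) * Y = Y * Polynomial.aeval B p := by
    intro p
    induction p using Polynomial.induction_on' with
    | add p q hp hq => simp only [map_add, Matrix.add_mul, Matrix.mul_add, hp, hq]
    | monomial k c =>
      simp only [Polynomial.aeval_monomial, Algebra.algebraMap_eq_smul_one,
        Matrix.smul_mul, Matrix.mul_smul, Matrix.one_mul]
      rw [hpow]
  have h0 : Y * Polynomial.aeval B A.charpoly = 0 := by
    rw [← haeval, Matrix.aeval_self_charpoly, Matrix.zero_mul]
  set l : List ℂ := A.charpoly.roots.toList with hl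
  have hsplit : A.charpoly = (l.map fun r => Polynomial.X - Polynomial.C r).prod := by
    have h1 : A.charpoly = (A.charpoly.roots.map fun r => Polynomial.X - Polynomial.C r).prod :=
      (IsAlgClosed.splits _).eq_prod_roots_of_monic A.charpoly_monic
    rw [h1, hl]
    rw [← Multiset.coe_toList A.charpoly.roots, Multiset.map_coe, Multiset.prod_coe,
      Multiset.coe_toList]
  have haB : Polynomial.aeval B A.charpoly = (l.map fun r => B - r • 1).prod := by
    conv_lhs => rw [hsplit]
    rw [map_list_prod, List.map_map]
    congr 1
    apply List.map_congr_left
    intro r _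
    simp [Function.comp, Algebra.algebraMap_eq_smul_one]
  have hunit : IsUnit (Polynomial.aeval B A.charpoly).det := by
    rw [haB, ← Matrix.coe_detMonoidHom, MonoidHom.map_list_prod, List.map_map]
    rw [isUnit_iff_ne_zero]
    apply List.prod_ne_zero
    rw [List.mem_map]
    rintro ⟨r, hr, hr0⟩
    have hroot : A.charpoly.eval r = 0 := by
      have hrm : r ∈ A.charpoly.roots := by rwa [← Multiset.mem_toList]
      exact Polynomial.isRoot_of_mem_roots hrm
    have hA0 : (A - r • 1).det = 0 := by
      have e : A - r • 1 = (-1 : ℂ) • (r • (1 : Matrix a a ℂ) - A) := by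
        match_scalars <;> ring
      rw [e, det_smul]
      rw [eval_charpoly'] at hroot
      rw [hroot]; ring
    exact hdet r hA0 (by simpa [Matrix.coe_detMonoidHom] using hr0)
  have hP := Matrix.mul_nonsing_inv _ hunit
  calc Y = Y * ((Polynomial.aeval B A.charpoly) * (Polynomial.aeval B A.charpoly)⁻¹) := by
        rw [hP, Matrix.mul_one]
    _ = (Y * Polynomial.aeval B A.charpoly) * (Polynomial.aeval B A.charpoly)⁻¹ := by
        rw [Matrix.mul_assoc]
    _ = 0 := by rw [h0, Matrix.zero_mul]

lemma sandwich {N p₁ p₂ q₁ q₂ : Type*} [Fintype N] [Fintype p₁] [Fintype p₂]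
    (Cm W J : Matrix N N ℂ) (hC : Cmᴴ * W * Cm = J)
    (U₂ : Matrix N p₂ ℂ) (U₁ : Matrix N p₁ ℂ) (S₂ : Matrix p₂ q₂ ℂ) (S₁ : Matrix p₁ q₁ ℂ) :
    (Cm * U₂ * S₂)ᴴ * W * (Cm * U₁ * S₁) = S₂ᴴ * (U₂ᴴ * J * U₁) * S₁ := by
  rw [← hC]
  simp only [conjTranspose_mul, Matrix.mul_assoc]

lemma pdet_ne_zero_of_reg {m : Type*} [Fintype m] [DecidableEq m] {A B : Matrix m m ℂ}
    (h : ∃ lam : ℂ, (A - lam • B).det ≠ 0) : pdet A B ≠ 0 := by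
  obtain ⟨lam, hlam⟩ := h
  intro h0
  apply hlam
  have := pdet_eval A B lam
  rw [h0, eval_zero] at this
  exact this.symm

lemma pdet_conjT {m : Type*} [Fintype m] [DecidableEq m] (A B : Matrix m m ℂ)
    (h : pdet A B ≠ 0) : pdet Aᴴ Bᴴ ≠ 0 := by
  intro h0
  apply h
  refine Polynomial.funext fun w => ?_
  rw [eval_zero, pdet_eval]
  refine pdet_conjT_aux A B (fun z => ?_) w
  have := pdet_eval Aᴴ Bᴴ z
  rw [h0, eval_zero] at this
  exact this.symm

/-- Theorem 2.2 (ii): if `(M, L)` is a regular symplectic pair, `U₁, U₂` are of full column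
rank with `M U₁ T₁ = L U₁ R₁`, `M U₂ T₂ = L U₂ R₂`, `(R₁,T₁)` and `(R₂,T₂)` regular pairs, and
`σ(R₁,T₁) ∩ σ(T₂ᴴ,R₂ᴴ) = ∅`, then `U₁` and `U₂` are `J`-orthogonal: `U₂ᴴ J U₁ = 0`. -/
theorem symplectic_pair_J_orthogonal {n r₁ r₂ : ℕ}
    (M L : Matrix (Fin n ⊕ Fin n) (Fin n ⊕ Fin n) ℂ)
    (hreg : ∃ lam : ℂ, (M - lam • L).det ≠ 0)
    (hsymp : M * Jmat n * Mᴴ = L * Jmat n * Lᴴ)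
    (U₁ : Matrix (Fin n ⊕ Fin n) (Fin r₁) ℂ) (U₂ : Matrix (Fin n ⊕ Fin n) (Fin r₂) ℂ)
    (hU₁ : U₁.rank = r₁) (hU₂ : U₂.rank = r₂)
    (R₁ T₁ : Matrix (Fin r₁) (Fin r₁) ℂ) (R₂ T₂ : Matrix (Fin r₂) (Fin r₂) ℂ)
    (hreg₁ : IsRegularPair R₁ T₁) (hreg₂ : IsRegularPair R₂ T₂)
    (heq₁ : M * U₁ * T₁ = L * U₁ * R₁) (heq₂ : M * U₂ * T₂ = L * U₂ * R₂)
    (hdisj : Disjoint (genSpec R₁ T₁) (genSpec T₂ᴴ R₂ᴴ)) :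
    U₂ᴴ * Jmat n * U₁ = 0 := by
  classical
  have hpML : pdet M L ≠ 0 := pdet_ne_zero_of_reg hreg
  have hpLM : pdet L M ≠ 0 := pdet_swap M L hpML
  have hfin : {z : ℂ | ((pdet M L) * (pdet L M)).IsRoot z}.Finite :=
    Polynomial.finite_setOf_isRoot (mul_ne_zero hpML hpLM)
  have hinj : Function.Injective (fun k : ℕ => ((k : ℂ) + 2)) := by
    intro x y hxy
    simpa using hxy
  obtain ⟨z, hzmem, hz⟩ := ((Set.infinite_range_of_injective hinj).diff hfin).nonempty
  obtain ⟨k, rfl⟩ := hzmem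
  set c : ℂ := (k : ℂ) + 2 with hc
  have hcstar : star c = c := by simp [hc]
  have hznotroot : ¬ ((pdet M L) * (pdet L M)).IsRoot c := hz
  rw [Polynomial.IsRoot.def, eval_mul, mul_eq_zero, not_or] at hznotroot
  have hdetA : (M - c • L).det ≠ 0 := by rw [← pdet_eval]; exact hznotroot.1
  have hdetLM : (L - c • M).det ≠ 0 := by rw [← pdet_eval]; exact hznotroot.2
  set J := Jmat n with hJdef
  set A := M - c • L with hA
  set B := c • M - L with hB
  have hdetB : B.det ≠ 0 := by
    have e : B = (-1 : ℂ) • (L - c • M) := by rw [hB]; match_scalars <;> ring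
    rw [e, det_smul]
    exact mul_ne_zero (pow_ne_zero _ (by norm_num)) hdetLM
  haveI : Invertible A := A.invertibleOfIsUnitDet (isUnit_iff_ne_zero.mpr hdetA)
  haveI : Invertible B := B.invertibleOfIsUnitDet (isUnit_iff_ne_zero.mpr hdetB)
  have hone : (1 : ℂ) - c * c ≠ 0 := by
    have e : (1 : ℂ) - c * c = -(((k : ℂ) + 1) * ((k : ℂ) + 3)) := by rw [hc]; ring
    rw [e, neg_ne_zero]
    refine mul_ne_zero ?_ ?_
    · exact Nat.cast_add_one_ne_zero k
    · intro h
      have h3 : ((k + 3 : ℕ) : ℂ) = 0 := by push_cast; linear_combination h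
      exact (by omega : k + 3 ≠ 0) (by exact_mod_cast h3)
  have hsymp' : A * J * Aᴴ = B * J * Bᴴ := by
    rw [hA, hB]
    simp only [conjTranspose_sub, conjTranspose_smul, hcstar, Matrix.sub_mul, Matrix.mul_sub,
      Matrix.smul_mul, Matrix.mul_smul]
    rw [hsymp]
    module
  have hBB : ⅟B * B = 1 := invOf_mul_self B
  have hBBH : Bᴴ * (⅟B)ᴴ = 1 := by rw [← conjTranspose_mul, hBB, conjTranspose_one]
  set W : Matrix (Fin n ⊕ Fin n) (Fin n ⊕ Fin n) ℂ := (⅟B)ᴴ * J * ⅟B with hW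
  have hBW : Bᴴ * W * B = J := by
    rw [hW]
    calc Bᴴ * ((⅟B)ᴴ * J * ⅟B) * B = (Bᴴ * (⅟B)ᴴ) * (J * (⅟B * B)) := by
          simp only [Matrix.mul_assoc]
      _ = J := by rw [hBBH, hBB, Matrix.mul_one, Matrix.one_mul]
  have hJJ : J * J = -1 := by
    rw [hJdef]
    have h1 : (-1 : Matrix (Fin n ⊕ Fin n) (Fin n ⊕ Fin n) ℂ) = fromBlocks (-1) 0 0 (-1) := by
      rw [← Matrix.fromBlocks_one (l := Fin n) (m := Fin n) (α := ℂ), Matrix.fromBlocks_neg]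
      congr 1 <;> simp
    rw [Jmat, Matrix.fromBlocks_multiply, h1]
    congr 1 <;> simp
  set S : Matrix (Fin n ⊕ Fin n) (Fin n ⊕ Fin n) ℂ := ⅟B * A with hS
  haveI : Invertible (⅟B) := invertibleInvOf
  haveI : Invertible S := by rw [hS]; exact invertibleMul _ _
  have hS1 : S * J * Sᴴ = J := by
    rw [hS]
    calc (⅟B * A) * J * (⅟B * A)ᴴ = ⅟B * ((A * J * Aᴴ) * (⅟B)ᴴ) := by
          simp only [conjTranspose_mul, Matrix.mul_assoc]
      _ = ⅟B * ((B * J * Bᴴ) * (⅟B)ᴴ) := by rw [hsymp']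
      _ = (⅟B * B) * (J * (Bᴴ * (⅟B)ᴴ)) := by simp only [Matrix.mul_assoc]
      _ = J := by rw [hBB, hBBH, Matrix.mul_one, Matrix.one_mul]
  have hSS : ⅟S * S = 1 := invOf_mul_self S
  have h1 : J * Sᴴ = ⅟S * J := by
    calc J * Sᴴ = (⅟S * S) * (J * Sᴴ) := by rw [hSS, Matrix.one_mul]
      _ = ⅟S * (S * J * Sᴴ) := by simp only [Matrix.mul_assoc]
      _ = ⅟S * J := by rw [hS1]
  have h2 : Sᴴ = -(J * (⅟S * J)) := by
    calc Sᴴ = 1 * Sᴴ := (Matrix.one_mul _).symm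
      _ = (-(J * J)) * Sᴴ := by rw [hJJ, neg_neg]
      _ = -(J * (J * Sᴴ)) := by simp only [Matrix.neg_mul, Matrix.mul_assoc]
      _ = -(J * (⅟S * J)) := by rw [h1]
  have hS2 : Sᴴ * J * S = J := by
    rw [h2]
    calc (-(J * (⅟S * J))) * J * S = -(J * (⅟S * (J * (J * S)))) := by
          simp only [Matrix.neg_mul, Matrix.mul_assoc]
      _ = J := by
          rw [← Matrix.mul_assoc J J S, hJJ, neg_one_mul, mul_neg, hSS]
          simp
  have hAW : Aᴴ * W * A = J := by
    rw [hW]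
    calc Aᴴ * ((⅟B)ᴴ * J * ⅟B) * A = (⅟B * A)ᴴ * J * (⅟B * A) := by
          simp only [conjTranspose_mul, Matrix.mul_assoc]
      _ = Sᴴ * J * S := by rw [hS]
      _ = J := hS2
  have h1' : A * U₁ * (T₁ - c • R₁) = B * U₁ * (c • T₁ - R₁) := by
    rw [hA, hB]
    simp only [Matrix.sub_mul, Matrix.mul_sub, Matrix.smul_mul, Matrix.mul_smul]
    rw [heq₁]
    module
  have h2' : A * U₂ * (T₂ - c • R₂) = B * U₂ * (c • T₂ - R₂) := by
    rw [hA, hB]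
    simp only [Matrix.sub_mul, Matrix.mul_sub, Matrix.smul_mul, Matrix.mul_smul]
    rw [heq₂]
    module
  have h5 : (T₂ - c • R₂)ᴴ * (U₂ᴴ * J * U₁) * (T₁ - c • R₁)
      = (c • T₂ - R₂)ᴴ * (U₂ᴴ * J * U₁) * (c • T₁ - R₁) := by
    calc (T₂ - c • R₂)ᴴ * (U₂ᴴ * J * U₁) * (T₁ - c • R₁)
        = (A * U₂ * (T₂ - c • R₂))ᴴ * W * (A * U₁ * (T₁ - c • R₁)) :=
          (sandwich A W J hAW U₂ U₁ _ _).symm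
      _ = (B * U₂ * (c • T₂ - R₂))ᴴ * W * (B * U₁ * (c • T₁ - R₁)) := by rw [h1', h2']
      _ = (c • T₂ - R₂)ᴴ * (U₂ᴴ * J * U₁) * (c • T₁ - R₁) := sandwich B W J hBW U₂ U₁ _ _
  have h7 : (1 - c * c) • (T₂ᴴ * (U₂ᴴ * J * U₁) * T₁ - R₂ᴴ * (U₂ᴴ * J * U₁) * R₁)
      = (T₂ - c • R₂)ᴴ * (U₂ᴴ * J * U₁) * (T₁ - c • R₁)
        - (c • T₂ - R₂)ᴴ * (U₂ᴴ * J * U₁) * (c • T₁ - R₁) := by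
    simp only [conjTranspose_sub, conjTranspose_smul, hcstar, Matrix.sub_mul, Matrix.mul_sub,
      Matrix.smul_mul, Matrix.mul_smul]
    module
  have hsylv0 : T₂ᴴ * (U₂ᴴ * J * U₁) * T₁ = R₂ᴴ * (U₂ᴴ * J * U₁) * R₁ := by
    have h8 : (1 - c * c) • (T₂ᴴ * (U₂ᴴ * J * U₁) * T₁ - R₂ᴴ * (U₂ᴴ * J * U₁) * R₁) = 0 := by
      rw [h7, h5, sub_self]
    rcases smul_eq_zero.mp h8 with h | h
    · exact absurd h hone
    · exact sub_eq_zero.mp h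
  -- choose α
  have hf₁ : pdet R₁ T₁ ≠ 0 := pdet_ne_zero_of_reg hreg₁
  have hf₂ : pdet T₂ᴴ R₂ᴴ ≠ 0 := pdet_conjT _ _ (pdet_swap R₂ T₂ (pdet_ne_zero_of_reg hreg₂))
  have hfin2 : {z : ℂ | ((pdet R₁ T₁) * (pdet T₂ᴴ R₂ᴴ)).IsRoot z}.Finite :=
    Polynomial.finite_setOf_isRoot (mul_ne_zero hf₁ hf₂)
  obtain ⟨α, hα⟩ := hfin2.infinite_compl.nonempty
  rw [Set.mem_compl_iff, Set.mem_setOf_eq, Polynomial.IsRoot.def, eval_mul, mul_eq_zero,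
    not_or] at hα
  have hdW₁ : (R₁ - α • T₁).det ≠ 0 := by rw [← pdet_eval]; exact hα.1
  have hdW₂ : (T₂ᴴ - α • R₂ᴴ).det ≠ 0 := by rw [← pdet_eval]; exact hα.2
  set W₁ := R₁ - α • T₁ with hW₁def
  set W₂ := T₂ᴴ - α • R₂ᴴ with hW₂def
  haveI : Invertible W₁ := W₁.invertibleOfIsUnitDet (isUnit_iff_ne_zero.mpr hdW₁)
  haveI : Invertible W₂ := W₂.invertibleOfIsUnitDet (isUnit_iff_ne_zero.mpr hdW₂)
  set Xm := U₂ᴴ * J * U₁ with hXmdef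
  have hkey2 : W₂ * (Xm * T₁) = R₂ᴴ * Xm * W₁ := by
    rw [hW₁def, hW₂def]
    simp only [Matrix.sub_mul, Matrix.mul_sub, Matrix.smul_mul, Matrix.mul_smul]
    rw [← Matrix.mul_assoc T₂ᴴ Xm T₁, ← Matrix.mul_assoc R₂ᴴ Xm T₁, hsylv0]
  have hsyl : (⅟W₂ * R₂ᴴ) * Xm = Xm * (T₁ * ⅟W₁) := by
    have e : R₂ᴴ * Xm * W₁ * ⅟W₁ = R₂ᴴ * Xm := by
      rw [Matrix.mul_assoc (R₂ᴴ * Xm), mul_invOf_self, Matrix.mul_one]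
    calc (⅟W₂ * R₂ᴴ) * Xm = ⅟W₂ * (R₂ᴴ * Xm * W₁ * ⅟W₁) := by rw [e, Matrix.mul_assoc]
      _ = ⅟W₂ * (W₂ * (Xm * T₁) * ⅟W₁) := by rw [← hkey2]
      _ = (⅟W₂ * W₂) * ((Xm * T₁) * ⅟W₁) := by simp only [Matrix.mul_assoc]
      _ = Xm * (T₁ * ⅟W₁) := by rw [invOf_mul_self, Matrix.one_mul, Matrix.mul_assoc]
  have hspec : ∀ μ : ℂ, ((⅟W₂ * R₂ᴴ) - μ • 1).det = 0 → ((T₁ * ⅟W₁) - μ • 1).det ≠ 0 := by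
    intro μ hμ2 hμ1
    have d2 : (((1 : ℂ) + μ * α) • R₂ᴴ - μ • T₂ᴴ).det = 0 := by
      have e : W₂ * (⅟W₂ * R₂ᴴ - μ • 1) = ((1 : ℂ) + μ * α) • R₂ᴴ - μ • T₂ᴴ := by
        rw [Matrix.mul_sub, ← Matrix.mul_assoc, mul_invOf_self, Matrix.one_mul,
          Matrix.mul_smul, Matrix.mul_one, hW₂def]
        module
      rw [← e, det_mul, hμ2, mul_zero]
    have d1 : (((1 : ℂ) + μ * α) • T₁ - μ • R₁).det = 0 := by
      have e : (T₁ * ⅟W₁ - μ • 1) * W₁ = ((1 : ℂ) + μ * α) • T₁ - μ • R₁ := by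
        rw [Matrix.sub_mul, Matrix.mul_assoc, invOf_mul_self, Matrix.mul_one,
          Matrix.smul_mul, Matrix.one_mul, hW₁def]
        module
      rw [← e, det_mul, hμ1, zero_mul]
    by_cases hμ0 : μ = 0
    · subst hμ0
      simp only [zero_mul, add_zero, one_smul, zero_smul, sub_zero] at d1 d2
      have m1 : (none : Option ℂ) ∈ genSpec R₁ T₁ := by
        show ¬ IsUnit T₁.det
        rw [isUnit_iff_ne_zero, not_not]
        exact d1
      have m2 : (none : Option ℂ) ∈ genSpec T₂ᴴ R₂ᴴ := by
        show ¬ IsUnit (R₂ᴴ).det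
        rw [isUnit_iff_ne_zero, not_not]
        exact d2
      exact Set.disjoint_left.mp hdisj m1 m2
    · have m1 : (some ((1 + μ * α) / μ)) ∈ genSpec R₁ T₁ := by
        show (R₁ - ((1 + μ * α) / μ) • T₁).det = 0
        have e : R₁ - ((1 + μ * α) / μ) • T₁ = (-μ⁻¹) • (((1 : ℂ) + μ * α) • T₁ - μ • R₁) := by
          match_scalars <;> field_simp
        rw [e, det_smul, d1, mul_zero]
      have m2 : (some ((1 + μ * α) / μ)) ∈ genSpec T₂ᴴ R₂ᴴ := by
        show (T₂ᴴ - ((1 + μ * α) / μ) • R₂ᴴ).det = 0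
        have e : T₂ᴴ - ((1 + μ * α) / μ) • R₂ᴴ = (-μ⁻¹) • (((1 : ℂ) + μ * α) • R₂ᴴ - μ • T₂ᴴ) := by
          match_scalars <;> field_simp
        rw [e, det_smul, d2, mul_zero]
      exact Set.disjoint_left.mp hdisj m1 m2
  exact sylvester_zero _ _ Xm hsyl hspec
end

section
/- Let (A,B) be a regular pair of n×n complex matrices, and let [C,D] ∈ ℂ^{n×2n} have full row rank with C A + D B = 0. Then the pair (D,C) is regular, i.e., det(D − λC) ≠ 0 for some λ ∈ ℂ. -/
open Matrix

lemma det_ne_zero_of_rank_eq {n : ℕ} (E : Matrix (Fin n) (Fin n) ℂ)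
    (h : E.rank = n) : E.det ≠ 0 := by
  have hsurj : Function.Surjective E.mulVecLin := by
    rw [← LinearMap.range_eq_top]
    apply Submodule.eq_top_of_finrank_eq
    rw [← Matrix.rank, h]
    simp
  have hu := Matrix.mulVec_surjective_iff_isUnit.mp hsurj
  exact isUnit_iff_ne_zero.mp ((Matrix.isUnit_iff_isUnit_det E).mp hu)

/-- Lemma 3.4: let `(A, B)` be a regular pair and `[C, D] ∈ ℂ^{n×2n}` of full row rank with
`C A + D B = 0`. Then the pair `(D, C)` is regular. -/
theorem regular_of_left_annihilator {n : ℕ}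
    (A B C D : Matrix (Fin n) (Fin n) ℂ)
    (hreg : ∃ lam : ℂ, (A - lam • B).det ≠ 0)
    (hrank : (Matrix.fromCols C D).rank = n)
    (hCD : C * A + D * B = 0) :
    ∃ lam : ℂ, (D - lam • C).det ≠ 0 := by
  obtain ⟨μ, hμ⟩ := hreg
  set M := A - μ • B with hM
  have hMunit : IsUnit M.det := isUnit_iff_ne_zero.mpr hμ
  have hMinv : M * M⁻¹ = 1 := Matrix.mul_nonsing_inv M hMunit
  set E := D + μ • C with hE
  -- C * M = -(E * B)
  have h1 : C * M = -(E * B) := by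
    have hca : C * A = -(D * B) := eq_neg_of_add_eq_zero_left hCD
    rw [hM, hE, Matrix.mul_sub, hca, Matrix.add_mul, Matrix.smul_mul, Matrix.mul_smul]
    abel
  have hC : C = -(E * (B * M⁻¹)) := by
    calc C = C * M * M⁻¹ := by rw [Matrix.mul_assoc, hMinv, Matrix.mul_one]
    _ = -(E * (B * M⁻¹)) := by rw [h1]; rw [Matrix.neg_mul, Matrix.mul_assoc]
  have hD : D = E * (1 + μ • (B * M⁻¹)) := by
    have : E * (B * M⁻¹) = -C := by rw [hC]; simp
    rw [Matrix.mul_add, Matrix.mul_one, Matrix.mul_smul, this, hE]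
    module
  have hfactor : Matrix.fromCols C D =
      E * Matrix.fromCols (-(B * M⁻¹)) (1 + μ • (B * M⁻¹)) := by
    rw [Matrix.mul_fromCols, ← hD]; rw [Matrix.mul_neg, ← hC]
  have hrankE : E.rank = n := by
    have h2 : (Matrix.fromCols C D).rank ≤ E.rank := by
      rw [hfactor]; exact Matrix.rank_mul_le_left _ _
    have h3 : E.rank ≤ n := by simpa using E.rank_le_card_width
    omega
  refine ⟨-μ, ?_⟩
  have : D - (-μ) • C = E := by rw [hE]; module
  rw [this]
  exact det_ne_zero_of_rank_eq E hrankE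
end

section
/- Radon's Lemma, direction (i): Let A, S, D ∈ ℂ^{n×n} with S = S^H and D = D^H. Suppose W(t) solves the Riccati differential equation W'(t) = −W(t)SW(t) + W(t)A + A^H W(t) + D with W(0) = W₀ on an open interval containing 0, Q(t) solves Q'(t) = (S W(t) − A) Q(t), Q(0) = I, and set P(t) = W(t)Q(t). Then Y(t) = [Q(t); P(t)] solves the linear system Y'(t) = H̃ Y(t), Y(0) = [I; W₀], where H̃ = [[−A, S],[D, A^H]]. -/
open Matrix

/-- Radon's Lemma, direction (i): if `W` solves the Riccati differential equation
`W' = −W S W + W A + Aᴴ W + D`, `W 0 = W₀`, and `Q` solves `Q' = (S W − A) Q`, `Q 0 = I`,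
then with `P := W Q`, the stacked function `Y = [Q; P]` solves the linear system
`Y' = H̃ Y`, `Y 0 = [I; W₀]`, where `H̃ = [[−A, S], [D, Aᴴ]]`.
Derivatives of matrix-valued functions are taken entrywise. -/
theorem radon_lemma_forward {n : ℕ}
    (A S D : Matrix (Fin n) (Fin n) ℂ)
    (hS : S.IsHermitian) (hD : D.IsHermitian)
    (U : Set ℝ) (hU : IsOpen U) (h0U : (0 : ℝ) ∈ U)
    (W Q : ℝ → Matrix (Fin n) (Fin n) ℂ)
    (W₀ : Matrix (Fin n) (Fin n) ℂ)
    (hW : ∀ t ∈ U, ∀ i j, HasDerivAt (fun s => W s i j)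
      ((-(W t * S * W t) + W t * A + Aᴴ * W t + D) i j) t)
    (hW0 : W 0 = W₀)
    (hQ : ∀ t ∈ U, ∀ i j, HasDerivAt (fun s => Q s i j)
      (((S * W t - A) * Q t) i j) t)
    (hQ0 : Q 0 = 1)
    (P : ℝ → Matrix (Fin n) (Fin n) ℂ)
    (hP : ∀ t, P t = W t * Q t) :
    (∀ t ∈ U, ∀ i j, HasDerivAt (fun s => Matrix.fromRows (Q s) (P s) i j)
      ((Matrix.fromBlocks (-A) S D Aᴴ * Matrix.fromRows (Q t) (P t)) i j) t) ∧
    Matrix.fromRows (Q 0) (P 0) = Matrix.fromRows 1 W₀ := by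
  constructor
  · intro t ht i j
    rw [Matrix.fromBlocks_mul_fromRows]
    cases i with
    | inl a =>
      simp only [Matrix.fromRows_apply_inl]
      have h1 : -A * Q t + S * P t = (S * W t - A) * Q t := by
        rw [hP]
        simp only [sub_mul, neg_mul, Matrix.mul_assoc]
        abel
      rw [h1]
      exact hQ t ht a j
    | inr a =>
      simp only [Matrix.fromRows_apply_inr]
      have key : ∀ s, P s a j = ∑ k, W s a k * Q s k j := by
        intro s; rw [hP]; rfl
      simp only [key]
      have hder := HasDerivAt.fun_sum (u := (Finset.univ : Finset (Fin n)))
        (fun k _ => (hW t ht a k).mul (hQ t ht k j))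
      refine HasDerivAt.congr_deriv hder ?_
      have hm : D * Q t + Aᴴ * P t
          = (-(W t * S * W t) + W t * A + Aᴴ * W t + D) * Q t
            + W t * ((S * W t - A) * Q t) := by
        rw [hP]
        simp only [add_mul, neg_mul, sub_mul, mul_sub, Matrix.mul_assoc]
        abel
      rw [hm]
      simp [Matrix.add_apply, Matrix.mul_apply, Finset.sum_add_distrib]
  · rw [hP, hQ0, hW0, mul_one]
end

section
/- Radon's Lemma, direction (ii): Let A, S, D ∈ ℂ^{n×n} with S = S^H, D = D^H, and let H̃ = [[−A, S],[D, A^H]]. Let Y(t) = [Q(t); P(t)] = exp(t H̃)·[I; W₀] where W₀ is Hermitian. If Q(t) is invertible for all t in an open interval I containing 0, then W(t) := P(t)Q(t)^{-1} solves on I the Riccati differential equation W'(t) = −W(t)SW(t) + W(t)A + A^H W(t) + D with W(0) = W₀. -/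
open Matrix

/-- Radon's Lemma, direction (ii): let `H̃ = [[−A, S], [D, Aᴴ]]` with `S, D` Hermitian, and let
`[Q t; P t] = exp(t H̃) [I; W₀]` with `W₀` Hermitian.  If `Q t` is invertible for all `t` in an
open interval `I` containing `0`, then `W t := P t (Q t)⁻¹` solves on `I` the Riccati
differential equation `W' = −W S W + W A + Aᴴ W + D` with `W 0 = W₀`.
Derivatives of matrix-valued functions are taken entrywise. -/
theorem radon_lemma_backward {n : ℕ}
    (A S D : Matrix (Fin n) (Fin n) ℂ)
    (hS : S.IsHermitian) (hD : D.IsHermitian)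
    (W₀ : Matrix (Fin n) (Fin n) ℂ) (hW₀ : W₀.IsHermitian)
    (Q P : ℝ → Matrix (Fin n) (Fin n) ℂ)
    (hQP : ∀ t : ℝ, Matrix.fromRows (Q t) (P t) =
      NormedSpace.exp ((t : ℂ) • Matrix.fromBlocks (-A) S D Aᴴ) * Matrix.fromRows 1 W₀)
    (I : Set ℝ) (hI : IsOpen I) (hI' : I.OrdConnected) (h0I : (0 : ℝ) ∈ I)
    (hQinv : ∀ t ∈ I, IsUnit (Q t).det) :
    P 0 * (Q 0)⁻¹ = W₀ ∧
    ∀ t ∈ I, ∀ i j, HasDerivAt (fun s => (P s * (Q s)⁻¹) i j)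
      ((-(P t * (Q t)⁻¹ * S * (P t * (Q t)⁻¹)) + P t * (Q t)⁻¹ * A
        + Aᴴ * (P t * (Q t)⁻¹) + D) i j) t := by
  classical
  replace hQP : ∀ t : ℝ, Matrix.fromRows (Q t) (P t) =
      @HMul.hMul _ _ _ Matrix.instHMulOfFintypeOfMulOfAddCommMonoid
      (NormedSpace.exp ((t : ℂ) • Matrix.fromBlocks (-A) S D Aᴴ)) (Matrix.fromRows 1 W₀) := hQP
  letI : SeminormedRing (Matrix (Fin n ⊕ Fin n) (Fin n ⊕ Fin n) ℂ) :=
    Matrix.linftyOpSemiNormedRing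
  letI : NormedRing (Matrix (Fin n ⊕ Fin n) (Fin n ⊕ Fin n) ℂ) := Matrix.linftyOpNormedRing
  letI : NormedAlgebra ℝ (Matrix (Fin n ⊕ Fin n) (Fin n ⊕ Fin n) ℂ) :=
    Matrix.linftyOpNormedAlgebra
  letI : NormedAlgebra ℂ (Matrix (Fin n ⊕ Fin n) (Fin n ⊕ Fin n) ℂ) :=
    Matrix.linftyOpNormedAlgebra
  letI : SeminormedRing (Matrix (Fin n) (Fin n) ℂ) := Matrix.linftyOpSemiNormedRing
  letI : NormedRing (Matrix (Fin n) (Fin n) ℂ) := Matrix.linftyOpNormedRing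
  letI : NormedAlgebra ℝ (Matrix (Fin n) (Fin n) ℂ) := Matrix.linftyOpNormedAlgebra
  letI : NormedAlgebra ℂ (Matrix (Fin n) (Fin n) ℂ) := Matrix.linftyOpNormedAlgebra
  set M : Matrix (Fin n ⊕ Fin n) (Fin n ⊕ Fin n) ℂ := Matrix.fromBlocks (-A) S D Aᴴ with hM
  set R : Matrix (Fin n ⊕ Fin n) (Fin n) ℂ := Matrix.fromRows 1 W₀ with hR
  -- initial condition
  have hinit : Q 0 = 1 ∧ P 0 = W₀ := by
    have h0 := hQP 0
    rw [show ((0:ℝ):ℂ) • M = 0 by simp, NormedSpace.exp_zero, Matrix.one_mul] at h0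
    exact (Matrix.fromRows_ext_iff _ _ _ _).1 h0
  constructor
  · rw [hinit.1, hinit.2, inv_one, mul_one]
  -- derivative of the exponential
  have hexp : ∀ t : ℝ, HasDerivAt (fun s : ℝ => NormedSpace.exp ((s : ℂ) • M))
      (M * NormedSpace.exp ((t : ℂ) • M)) t := by
    intro t
    have h1 : ∀ s : ℝ, (s : ℂ) • M = s • M := fun s => by
      rw [← algebraMap_smul ℂ s M]; norm_num
    simp only [h1]
    exact hasDerivAt_exp_smul_const' M t
  -- entrywise derivative of fromRows (Q s) (P s)
  have hEnt : ∀ (t : ℝ) (i : Fin n ⊕ Fin n) (j : Fin n),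
      HasDerivAt (fun s => Matrix.fromRows (Q s) (P s) i j)
        ((M * Matrix.fromRows (Q t) (P t)) i j) t := by
    intro t i j
    let φ : Matrix (Fin n ⊕ Fin n) (Fin n ⊕ Fin n) ℂ →ₗ[ℝ] ℂ :=
      { toFun := fun X => (X * R) i j
        map_add' := fun X Y => by simp [Matrix.add_mul]
        map_smul' := fun r X => by simp [Matrix.smul_mul] }
    have hc := (LinearMap.toContinuousLinearMap φ).hasFDerivAt.comp_hasDerivAt t (hexp t)
    simp only [Function.comp_def] at hc
    have heq : (fun s : ℝ => (LinearMap.toContinuousLinearMap φ) (NormedSpace.exp ((s:ℂ) • M)))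
        = fun s => Matrix.fromRows (Q s) (P s) i j := by
      funext s
      simp only [LinearMap.coe_toContinuousLinearMap', φ, LinearMap.coe_mk, AddHom.coe_mk]
      rw [← hQP s]
    rw [heq] at hc
    convert hc using 1
    show _ = (M * NormedSpace.exp ((t:ℂ) • M) * R) i j
    rw [Matrix.mul_assoc, ← hQP t]
    rfl
  -- entrywise derivatives of Q and P
  have hMQP : ∀ t : ℝ, M * Matrix.fromRows (Q t) (P t)
      = Matrix.fromRows (-A * Q t + S * P t) (D * Q t + Aᴴ * P t) := fun t => by
    rw [hM, Matrix.fromBlocks_mul_fromRows]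
  -- entrywise-to-matrix conversion
  have entry_to_mat : ∀ (f : ℝ → Matrix (Fin n) (Fin n) ℂ) (f' : Matrix (Fin n) (Fin n) ℂ)
      (t : ℝ), (∀ i j, HasDerivAt (fun s => f s i j) (f' i j) t) → HasDerivAt f f' t := by
    intro f f' t h
    have key : ∀ X : Matrix (Fin n) (Fin n) ℂ,
        X = ∑ i, ∑ j, X i j • Matrix.single i j (1 : ℂ) := by
      intro X
      conv_lhs => rw [Matrix.matrix_eq_sum_single X]
      simp [Matrix.smul_single]
    have h2 : HasDerivAt
        (fun s => ∑ i, ∑ j, f s i j • Matrix.single i j (1 : ℂ))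
        (∑ i, ∑ j, f' i j • Matrix.single i j (1 : ℂ)) t :=
      HasDerivAt.fun_sum fun i _ => HasDerivAt.fun_sum fun j _ => (h i j).smul_const _
    have hfun : (fun s => ∑ i, ∑ j, f s i j • Matrix.single i j (1 : ℂ)) = f := by
      funext s; exact (key (f s)).symm
    rw [hfun, ← key f'] at h2
    exact h2
  have hQ' : ∀ t : ℝ, HasDerivAt Q (-A * Q t + S * P t) t := by
    intro t
    refine entry_to_mat _ _ _ fun i j => ?_
    have := hEnt t (Sum.inl i) j
    rw [hMQP t] at this
    simpa [Matrix.fromRows_apply_inl] using this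
  have hP' : ∀ t : ℝ, HasDerivAt P (D * Q t + Aᴴ * P t) t := by
    intro t
    refine entry_to_mat _ _ _ fun i j => ?_
    have := hEnt t (Sum.inr i) j
    rw [hMQP t] at this
    simpa [Matrix.fromRows_apply_inr] using this
  -- main derivative claim
  intro t ht i j
  have hdet := hQinv t ht
  have hu : IsUnit (Q t) := (Matrix.isUnit_iff_isUnit_det _).2 hdet
  obtain ⟨u, hu⟩ := hu
  have huinv : (↑u⁻¹ : Matrix (Fin n) (Fin n) ℂ) = (Q t)⁻¹ := by
    rw [Matrix.nonsing_inv_eq_ringInverse, ← hu, Ring.inverse_unit]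
  have hinv : HasDerivAt (fun s => Ring.inverse (Q s))
      (-((Q t)⁻¹ * (-A * Q t + S * P t) * (Q t)⁻¹)) t := by
    have h1 := hasFDerivAt_ringInverse (𝕜 := ℝ) u
    rw [hu, huinv] at h1
    have h2 := h1.comp_hasDerivAt t (hQ' t)
    simp [Function.comp_def] at h2
    rw [Matrix.neg_mul]
    convert h2 using 1 <;> rfl
  have hW : HasDerivAt (fun s => P s * Ring.inverse (Q s))
      ((D * Q t + Aᴴ * P t) * Ring.inverse (Q t)
        + P t * -((Q t)⁻¹ * (-A * Q t + S * P t) * (Q t)⁻¹)) t :=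
    (hP' t).mul hinv
  -- identify the derivative value
  have hQi : Q t * (Q t)⁻¹ = 1 := Matrix.mul_nonsing_inv _ hdet
  have hval : (D * Q t + Aᴴ * P t) * Ring.inverse (Q t)
        + P t * -((Q t)⁻¹ * (-A * Q t + S * P t) * (Q t)⁻¹)
      = -(P t * (Q t)⁻¹ * S * (P t * (Q t)⁻¹)) + P t * (Q t)⁻¹ * A
        + Aᴴ * (P t * (Q t)⁻¹) + D := by
    rw [← Matrix.nonsing_inv_eq_ringInverse]
    set Qi := (Q t)⁻¹
    simp only [Matrix.add_mul, Matrix.mul_add, Matrix.neg_mul, Matrix.mul_neg, mul_neg,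
      neg_mul, neg_neg, mul_assoc]
    rw [hQi]
    noncomm_ring
  rw [hval] at hW
  -- convert to entrywise and to ⁻¹ form
  have hfun2 : (fun s => (P s * (Q s)⁻¹) i j) = fun s => (P s * Ring.inverse (Q s)) i j := by
    funext s; rw [Matrix.nonsing_inv_eq_ringInverse]
  rw [hfun2]
  let ψ : Matrix (Fin n) (Fin n) ℂ →ₗ[ℝ] ℂ :=
    { toFun := fun X => X i j
      map_add' := fun X Y => rfl
      map_smul' := fun r X => rfl }
  have := (LinearMap.toContinuousLinearMap ψ).hasFDerivAt.comp_hasDerivAt t hW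
  exact this
end

section
/- Fix n ∈ ℕ and a real t ≠ 0. Let Γ_{n+1}^{2n}(t) be the n×n Toeplitz matrix with (i,j) entry t^{n+1+j−i}/(n+1+j−i)!, let P_n be the antidiagonal sign matrix with P_n(i, n+1−i) = (−1)^{n+1−i}, let φ_n(t) = (t^n/n!, …, t)^⊤ and ψ_n(t) = (t, …, t^n/n!)^⊤. Then κ_n := ψ_n(t)^H P_n (Γ_{n+1}^{2n}(t) P_n)^{-1} φ_n(t) equals 0 if n is even and 2 if n is odd; in particular κ_n is independent of t. -/
open Matrix Finset Polynomial
open scoped fwdDiff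

/-- The antidiagonal sign matrix `P_n`. -/
def Pmat (n : ℕ) : Matrix (Fin n) (Fin n) ℝ :=
  Matrix.of fun i j => if (i : ℕ) + (j : ℕ) = n - 1 then (-1 : ℝ) ^ ((j : ℕ) + 1) else 0

/-- The Toeplitz matrix `Γ_{n+1}^{2n}(t)` with `(i,j)` entry `t^{n+1+j−i}/(n+1+j−i)!`. -/
noncomputable def GammaMat' (n : ℕ) (t : ℝ) : Matrix (Fin n) (Fin n) ℝ :=
  Matrix.of fun i j =>
    t ^ (n + 1 + (j : ℕ) - (i : ℕ)) / (n + 1 + (j : ℕ) - (i : ℕ)).factorial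

/-- The vector `φ_n(t) = (t^n/n!, …, t)ᵀ`. -/
noncomputable def phiVec (n : ℕ) (t : ℝ) : Fin n → ℝ :=
  fun i => t ^ (n - (i : ℕ)) / (n - (i : ℕ)).factorial

/-- The vector `ψ_n(t) = (t, t²/2!, …, t^n/n!)ᵀ`. -/
noncomputable def psiVec (n : ℕ) (t : ℝ) : Fin n → ℝ :=
  fun i => t ^ ((i : ℕ) + 1) / ((i : ℕ) + 1).factorial


lemma fact_desc (a j : ℕ) (hj : j ≤ a) :
    a.factorial = (a - j).factorial * ∏ r ∈ range j, (a - r) := by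
  rw [← Nat.descFactorial_eq_prod_range, Nat.factorial_mul_descFactorial hj]


/-- `∑ (-1)^k C(n,k) C(k,j) = (-1)^n [n = j]`. -/
lemma alt_sum_choose (n j : ℕ) :
    ∑ k ∈ range (n + 1), (-1 : ℤ) ^ k * n.choose k * k.choose j
      = (-1 : ℤ) ^ n * (if n = j then 1 else 0) := by
  have h := fwdDiff_iter_eq_sum_shift (1 : ℕ) (fun x : ℕ => (x.choose j : ℤ)) n 0
  rw [fwdDiff_iter_choose_zero] at h
  have h2 : ∀ k ∈ range (n + 1),
      ((-1 : ℤ) ^ (n - k) * n.choose k) • ((0 + k • 1 : ℕ).choose j : ℤ)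
        = (-1 : ℤ) ^ n * ((-1 : ℤ) ^ k * n.choose k * k.choose j) := by
    intro k hk
    rw [mem_range] at hk
    have hkn : k ≤ n := by omega
    have : (-1 : ℤ) ^ n * (-1 : ℤ) ^ k = (-1 : ℤ) ^ (n - k) := by
      rw [← pow_add]
      have : n + k = (n - k) + 2 * k := by omega
      rw [this, pow_add, pow_mul]
      norm_num
    simp only [smul_eq_mul, smul_eq_mul, one_mul, zero_add]
    rw [← this]
    ring
  rw [Finset.sum_congr rfl h2, ← Finset.mul_sum] at h
  calc ∑ k ∈ range (n + 1), (-1 : ℤ) ^ k * n.choose k * k.choose j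
      = ((-1 : ℤ) ^ n * (-1 : ℤ) ^ n) * ∑ k ∈ range (n + 1), (-1 : ℤ) ^ k * n.choose k * k.choose j := by
        rw [← pow_add, ← two_mul, pow_mul]; norm_num
    _ = (-1 : ℤ) ^ n * (if n = j then 1 else 0) := by rw [mul_assoc, h]

lemma Z_lemma (n s d : ℕ) :
    ∑ k ∈ range (n + 1), (-1 : ℤ) ^ k * n.choose k * (s + k).choose d
      = (-1 : ℤ) ^ n * (if n ≤ d then (s.choose (d - n) : ℤ) else 0) := by
  have hv : ∀ k : ℕ, ((s + k).choose d : ℤ)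
      = ∑ a ∈ range (d + 1), (s.choose a : ℤ) * (k.choose (d - a)) := by
    intro k
    have := Nat.add_choose_eq s k d
    rw [Finset.Nat.sum_antidiagonal_eq_sum_range_succ_mk] at this
    exact_mod_cast congrArg (Nat.cast : ℕ → ℤ) this
  calc ∑ k ∈ range (n + 1), (-1 : ℤ) ^ k * n.choose k * (s + k).choose d
      = ∑ a ∈ range (d + 1), (s.choose a : ℤ) *
          ∑ k ∈ range (n + 1), (-1 : ℤ) ^ k * n.choose k * (k.choose (d - a)) := by
        simp_rw [hv, Finset.mul_sum]
        rw [Finset.sum_comm]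
        exact Finset.sum_congr rfl fun a _ =>
          Finset.sum_congr rfl fun k _ => by ring

    _ = ∑ a ∈ range (d + 1), (s.choose a : ℤ) * ((-1 : ℤ) ^ n * (if n = d - a then 1 else 0)) := by
        simp_rw [alt_sum_choose]
    _ = (-1 : ℤ) ^ n * (if n ≤ d then (s.choose (d - n) : ℤ) else 0) := by
        by_cases hnd : n ≤ d
        · rw [Finset.sum_eq_single (d - n)]
          · rw [if_pos hnd, if_pos (by omega : n = d - (d - n))]; ring
          · intro b hb hbne
            rw [mem_range] at hb
            rw [if_neg (by omega), mul_zero, mul_zero]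
          · intro hmem
            exact absurd (mem_range.mpr (by omega)) hmem
        · rw [if_neg hnd]
          rw [Finset.sum_eq_zero, mul_zero]
          intro a ha
          rw [mem_range] at ha
          rw [if_neg (by omega), mul_zero, mul_zero]

lemma T_lemma (n m : ℕ) (hm : m ≤ n) :
    ∑ k ∈ range (n + 1),
        (-1 : ℝ) ^ k * (n + k).factorial /
          (k.factorial * ((n - k).factorial * (m + k).factorial))
      = if m = 0 then (-1 : ℝ) ^ n else 0 := by
  set d := n - m with hd
  have key : ∀ k ∈ range (n + 1),
      (-1 : ℝ) ^ k * (n + k).factorial /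
          (k.factorial * ((n - k).factorial * (m + k).factorial))
        = (((-1 : ℤ) ^ k * n.choose k * (n + k).choose d : ℤ) : ℝ)
            * d.factorial / n.factorial := by
    intro k hk
    rw [mem_range] at hk
    have hkn : k ≤ n := by omega
    have h1 : (n + k).choose d * d.factorial * (m + k).factorial = (n + k).factorial := by
      have := Nat.choose_mul_factorial_mul_factorial (show d ≤ n + k by omega)
      rwa [show n + k - d = m + k by omega] at this
    have h2 : n.choose k * k.factorial * (n - k).factorial = n.factorial :=
      Nat.choose_mul_factorial_mul_factorial hkn
    have e1 : ((n + k).factorial : ℝ) = (n + k).choose d * d.factorial * (m + k).factorial := by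
      exact_mod_cast congrArg (Nat.cast : ℕ → ℝ) h1.symm
    have e2 : (n.factorial : ℝ) = n.choose k * k.factorial * (n - k).factorial := by
      exact_mod_cast congrArg (Nat.cast : ℕ → ℝ) h2.symm
    rw [e1, e2]
    push_cast
    have f1 : (k.factorial : ℝ) ≠ 0 := by positivity
    have f2 : ((n - k).factorial : ℝ) ≠ 0 := by positivity
    have f3 : ((m + k).factorial : ℝ) ≠ 0 := by positivity
    have f4 : ((n.choose k : ℝ)) ≠ 0 := by
      have := Nat.choose_pos hkn; positivity
    field_simp
  rw [Finset.sum_congr rfl key]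
  rw [← Finset.sum_div, ← Finset.sum_mul, ← Int.cast_sum, Z_lemma]
  by_cases hm0 : m = 0
  · subst hm0
    rw [if_pos rfl, if_pos (by omega : n ≤ d), show d - n = 0 by omega, Nat.choose_zero_right]
    push_cast
    have : (n.factorial : ℝ) ≠ 0 := by positivity
    rw [show d = n by omega]
    field_simp
  · rw [if_neg hm0, if_neg (by omega : ¬ n ≤ d)]
    simp

lemma S_lemma (n m : ℕ) (hm : m ≤ n) :
    ∑ k ∈ range n,
        (-1 : ℝ) ^ k * (n + k + 1).factorial /
          ((k + 1).factorial * ((n - 1 - k).factorial * (m + k + 1).factorial))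
      = 1 / m.factorial - (if m = 0 then (-1 : ℝ) ^ n else 0) := by
  have hT := T_lemma n m hm
  rw [Finset.sum_range_succ'] at hT
  have h0 : (-1 : ℝ) ^ 0 * (n + 0).factorial /
      ((0:ℕ).factorial * ((n - 0).factorial * (m + 0).factorial)) = 1 / m.factorial := by
    simp only [pow_zero, one_mul, Nat.add_zero, Nat.sub_zero, Nat.factorial_zero, Nat.zero_add]
    have : (n.factorial : ℝ) ≠ 0 := by positivity
    field_simp
    norm_num
  rw [h0] at hT
  have hterm : ∀ k ∈ range n,
      (-1 : ℝ) ^ (k + 1) * (n + (k + 1)).factorial /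
          ((k + 1).factorial * ((n - (k + 1)).factorial * (m + (k + 1)).factorial))
        = -((-1 : ℝ) ^ k * (n + k + 1).factorial /
          ((k + 1).factorial * ((n - 1 - k).factorial * (m + k + 1).factorial))) := by
    intro k hk
    rw [show n - (k + 1) = n - 1 - k by omega, show n + (k + 1) = n + k + 1 by omega,
      show m + (k + 1) = m + k + 1 by omega, pow_succ]
    ring
  rw [Finset.sum_congr rfl hterm, Finset.sum_neg_distrib] at hT
  linarith [hT]

noncomputable def wAux (n k : ℕ) : ℝ :=
  (-1 : ℝ) ^ k * (n + k + 1).factorial / ((k + 1).factorial * (n - 1 - k).factorial)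

noncomputable def uVec (n : ℕ) (t : ℝ) : Fin n → ℝ :=
  fun j => (-1 : ℝ) ^ ((j : ℕ) + 1) * wAux n (n - 1 - (j : ℕ)) * t⁻¹ ^ (n - (j : ℕ))

lemma GP_entry (n : ℕ) (t : ℝ) (i j : Fin n) :
    (GammaMat' n t * Pmat n) i j
      = (-1 : ℝ) ^ ((j : ℕ) + 1) *
          (t ^ (2 * n - ((i : ℕ) + (j : ℕ))) / (2 * n - ((i : ℕ) + (j : ℕ))).factorial) := by
  have hj : (j : ℕ) < n := j.isLt
  have hi : (i : ℕ) < n := i.isLt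
  rw [Matrix.mul_apply]
  rw [Finset.sum_eq_single (⟨n - 1 - (j : ℕ), by omega⟩ : Fin n)]
  · simp only [GammaMat', Pmat, Matrix.of_apply]
    rw [if_pos (show ((⟨n - 1 - (j : ℕ), by omega⟩ : Fin n) : ℕ) + (j : ℕ) = n - 1 from by
      simp only [Fin.val_mk]; omega)]
    rw [show n + 1 + (n - 1 - (j : ℕ)) - (i : ℕ) = 2 * n - ((i : ℕ) + (j : ℕ)) by omega]
    ring
  · intro k _ hk
    have : (k : ℕ) ≠ n - 1 - (j : ℕ) := by
      intro h; exact hk (Fin.ext (by simpa using h))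
    simp only [GammaMat', Pmat, Matrix.of_apply]
    rw [if_neg (by omega), mul_zero]
  · intro h; exact absurd (Finset.mem_univ _) h


lemma GP_det_ne (n : ℕ) (t : ℝ) (ht : t ≠ 0) : (GammaMat' n t * Pmat n).det ≠ 0 := by
  set pp : Fin n → ℝ[X] :=
    fun j => ∏ r ∈ range (j : ℕ), (X + C (((2 * n - r : ℕ) : ℝ))) with hpp
  have hmonic : ∀ j, (pp j).Monic :=
    fun j => monic_prod_of_monic _ _ fun r _ => monic_X_add_C _
  have hdeg : ∀ j : Fin n, (pp j).natDegree = (j : ℕ) := by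
    intro j
    rw [hpp, natDegree_prod _ _ fun r _ => (monic_X_add_C _).ne_zero]
    simp only [natDegree_X_add_C, Finset.sum_const, smul_eq_mul, mul_one, Finset.card_range]
  set M : Matrix (Fin n) (Fin n) ℝ := Matrix.of fun i j => (pp j).eval (-(i : ℝ)) with hM
  have hMdet : M.det ≠ 0 := by
    rw [hM, ← Matrix.det_eval_matrixOfPolynomials_eq_det_vandermonde
      (fun i : Fin n => -(i : ℝ)) pp hdeg hmonic]
    rw [Matrix.det_vandermonde_ne_zero_iff]
    intro a b hab
    have : ((a : ℕ) : ℝ) = ((b : ℕ) : ℝ) := by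
      have := neg_injective hab; exact_mod_cast this
    exact Fin.ext (Nat.cast_injective this)
  have hfact : GammaMat' n t * Pmat n =
      Matrix.diagonal (fun i : Fin n => t ^ (n - (i : ℕ)) / (2 * n - (i : ℕ)).factorial) * M *
        Matrix.diagonal (fun j : Fin n => (-1 : ℝ) ^ ((j : ℕ) + 1) * t ^ (n - (j : ℕ))) := by
    ext i j
    have hj : (j : ℕ) < n := j.isLt
    have hi : (i : ℕ) < n := i.isLt
    rw [GP_entry, Matrix.mul_diagonal, Matrix.diagonal_mul]
    set Pd : ℝ := ∏ r ∈ range (j : ℕ), (((2 * n - ((i : ℕ) + r)) : ℕ) : ℝ) with hPdDef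
    have heval : M i j = Pd := by
      rw [hM, hPdDef]
      simp only [Matrix.of_apply, hpp, eval_prod, eval_add, eval_X, eval_C]
      refine Finset.prod_congr rfl fun r hr => ?_
      rw [mem_range] at hr
      have h2 : ((2 * n - ((i : ℕ) + r) : ℕ) : ℝ)
          = ((2 * n - r : ℕ) : ℝ) - ((i : ℕ) : ℝ) := by
        rw [show (2 * n - ((i : ℕ) + r)) = (2 * n - r) - (i : ℕ) by omega,
          Nat.cast_sub (by omega)]
      rw [h2]; ring
    have hfac : ((2 * n - (i : ℕ)).factorial : ℝ)
        = ((2 * n - ((i : ℕ) + (j : ℕ))).factorial : ℝ) * Pd := by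
      rw [hPdDef, ← Nat.cast_prod, ← Nat.cast_mul]
      congr 1
      rw [fact_desc (2 * n - (i : ℕ)) (j : ℕ) (by omega),
        show 2 * n - (i : ℕ) - (j : ℕ) = 2 * n - ((i : ℕ) + (j : ℕ)) from by omega]
      congr 1
      refine Finset.prod_congr rfl fun r hr => ?_
      rw [mem_range] at hr; omega
    have hPd : Pd ≠ 0 := by
      rw [hPdDef]
      refine Finset.prod_ne_zero_iff.mpr fun r hr => ?_
      rw [mem_range] at hr
      have : 0 < 2 * n - ((i : ℕ) + r) := by omega
      positivity
    have hpow : t ^ (2 * n - ((i : ℕ) + (j : ℕ))) = t ^ (n - (i : ℕ)) * t ^ (n - (j : ℕ)) := by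
      rw [← pow_add]; congr 1; omega
    have hf1 : ((2 * n - ((i : ℕ) + (j : ℕ))).factorial : ℝ) ≠ 0 := by positivity
    rw [heval, hpow, hfac]
    field_simp
  rw [hfact, Matrix.det_mul, Matrix.det_mul, Matrix.det_diagonal, Matrix.det_diagonal]
  refine mul_ne_zero (mul_ne_zero (Finset.prod_ne_zero_iff.mpr fun i _ => ?_) hMdet)
    (Finset.prod_ne_zero_iff.mpr fun j _ => ?_)
  · have h1 : ((2 * n - (i : ℕ)).factorial : ℝ) ≠ 0 := by positivity
    exact div_ne_zero (pow_ne_zero _ ht) h1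
  · exact mul_ne_zero (pow_ne_zero _ (by norm_num)) (pow_ne_zero _ ht)

lemma GP_mulVec_u (n : ℕ) (t : ℝ) (ht : t ≠ 0) :
    (GammaMat' n t * Pmat n).mulVec (uVec n t) = phiVec n t := by
  ext i
  have hi : (i : ℕ) < n := i.isLt
  rw [Matrix.mulVec, dotProduct]
  have hterm : ∀ j : Fin n,
      (GammaMat' n t * Pmat n) i j * uVec n t j
        = t ^ (n - (i : ℕ)) *
            (wAux n (n - 1 - (j : ℕ)) / ((n - (i : ℕ)) + (n - 1 - (j : ℕ)) + 1).factorial) := by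
    intro j
    have hj : (j : ℕ) < n := j.isLt
    rw [GP_entry]
    show _ = _
    unfold uVec
    have h1 : (-1 : ℝ) ^ ((j : ℕ) + 1) * (-1 : ℝ) ^ ((j : ℕ) + 1) = 1 := by
      rw [← mul_pow]; norm_num
    have h2 : t ^ (2 * n - ((i : ℕ) + (j : ℕ)))
        = t ^ (n - (i : ℕ)) * t ^ (n - (j : ℕ)) := by
      rw [← pow_add]; congr 1; omega
    have h3 : t ^ (n - (j : ℕ)) * t⁻¹ ^ (n - (j : ℕ)) = 1 := by
      rw [← mul_pow, mul_inv_cancel₀ ht, one_pow]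
    have h4 : ((n - (i : ℕ)) + (n - 1 - (j : ℕ)) + 1) = 2 * n - ((i : ℕ) + (j : ℕ)) := by
      omega
    rw [h2, h4]
    calc (-1 : ℝ) ^ ((j : ℕ) + 1) *
          (t ^ (n - (i : ℕ)) * t ^ (n - (j : ℕ)) / (2 * n - ((i : ℕ) + (j : ℕ))).factorial) *
          ((-1 : ℝ) ^ ((j : ℕ) + 1) * wAux n (n - 1 - (j : ℕ)) * t⁻¹ ^ (n - (j : ℕ)))
        = ((-1 : ℝ) ^ ((j : ℕ) + 1) * (-1 : ℝ) ^ ((j : ℕ) + 1)) *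
            ((t ^ (n - (j : ℕ)) * t⁻¹ ^ (n - (j : ℕ))) *
              (t ^ (n - (i : ℕ)) *
                (wAux n (n - 1 - (j : ℕ)) / (2 * n - ((i : ℕ) + (j : ℕ))).factorial))) := by
          ring
      _ = _ := by rw [h1, h3]; ring
  rw [Finset.sum_congr rfl fun j _ => hterm j, ← Finset.mul_sum]
  have hsum : ∑ j : Fin n,
      wAux n (n - 1 - (j : ℕ)) / ((n - (i : ℕ)) + (n - 1 - (j : ℕ)) + 1).factorial
        = 1 / (n - (i : ℕ)).factorial := by
    set m := n - (i : ℕ) with hm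
    rw [Fin.sum_univ_eq_sum_range (fun j => wAux n (n - 1 - j) / (m + (n - 1 - j) + 1).factorial)]
    rw [Finset.sum_range_reflect (fun k => wAux n k / ((m + k + 1).factorial : ℝ)) n]
    have := S_lemma n m (by omega)
    rw [if_neg (by omega : ¬ m = 0), sub_zero] at this
    rw [← this]
    refine Finset.sum_congr rfl fun k hk => ?_
    unfold wAux
    rw [mem_range] at hk
    field_simp
  rw [hsum, phiVec]
  ring

/-- Theorem 5.3: `κ_n = ψ_nᴴ P_n (Γ_{n+1}^{2n} P_n)⁻¹ φ_n` equals `0` if `n` is even and `2`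
if `n` is odd; in particular it is independent of `t ≠ 0`. -/
theorem kappa_value {n : ℕ} (t : ℝ) (ht : t ≠ 0) :
    Matrix.vecMul (psiVec n t) (Pmat n) ⬝ᵥ
        ((GammaMat' n t * Pmat n)⁻¹).mulVec (phiVec n t) =
      if Even n then 0 else 2 := by
  rcases Nat.eq_zero_or_pos n with hn | hn
  · subst hn
    simp [dotProduct]
  have hdet := GP_det_ne n t ht
  have hinv : ((GammaMat' n t * Pmat n)⁻¹).mulVec (phiVec n t) = uVec n t := by
    rw [← GP_mulVec_u n t ht, Matrix.mulVec_mulVec,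
      Matrix.nonsing_inv_mul _ (isUnit_iff_ne_zero.mpr hdet), Matrix.one_mulVec]
  rw [hinv, dotProduct]
  have hvm : ∀ j : Fin n,
      Matrix.vecMul (psiVec n t) (Pmat n) j
        = (t ^ (n - (j : ℕ)) / (n - (j : ℕ)).factorial) * (-1 : ℝ) ^ ((j : ℕ) + 1) := by
    intro j
    have hj : (j : ℕ) < n := j.isLt
    rw [Matrix.vecMul, dotProduct]
    rw [Finset.sum_eq_single (⟨n - 1 - (j : ℕ), by omega⟩ : Fin n)]
    · simp only [psiVec, Pmat, Matrix.of_apply]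
      rw [if_pos (show ((⟨n - 1 - (j : ℕ), by omega⟩ : Fin n) : ℕ) + (j : ℕ) = n - 1 from by
        simp only [Fin.val_mk]; omega)]
      rw [show ((⟨n - 1 - (j : ℕ), by omega⟩ : Fin n) : ℕ) + 1 = n - (j : ℕ) from by
        simp only [Fin.val_mk]; omega]
    · intro k _ hk
      have : (k : ℕ) ≠ n - 1 - (j : ℕ) := by
        intro h; exact hk (Fin.ext (by simpa using h))
      simp only [psiVec, Pmat, Matrix.of_apply]
      rw [if_neg (by omega), mul_zero]
    · intro h; exact absurd (Finset.mem_univ _) h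
  have hterm : ∀ j : Fin n,
      Matrix.vecMul (psiVec n t) (Pmat n) j * uVec n t j
        = wAux n (n - 1 - (j : ℕ)) / ((n - 1 - (j : ℕ)) + 1).factorial := by
    intro j
    have hj : (j : ℕ) < n := j.isLt
    rw [hvm j]
    unfold uVec
    have h1 : (-1 : ℝ) ^ ((j : ℕ) + 1) * (-1 : ℝ) ^ ((j : ℕ) + 1) = 1 := by
      rw [← mul_pow]; norm_num
    have h3 : t ^ (n - (j : ℕ)) * t⁻¹ ^ (n - (j : ℕ)) = 1 := by
      rw [← mul_pow, mul_inv_cancel₀ ht, one_pow]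
    have h4 : (n - 1 - (j : ℕ)) + 1 = n - (j : ℕ) := by omega
    rw [h4]
    calc t ^ (n - (j : ℕ)) / (n - (j : ℕ)).factorial * (-1 : ℝ) ^ ((j : ℕ) + 1) *
          ((-1 : ℝ) ^ ((j : ℕ) + 1) * wAux n (n - 1 - (j : ℕ)) * t⁻¹ ^ (n - (j : ℕ)))
        = ((-1 : ℝ) ^ ((j : ℕ) + 1) * (-1 : ℝ) ^ ((j : ℕ) + 1)) *
            ((t ^ (n - (j : ℕ)) * t⁻¹ ^ (n - (j : ℕ))) *
              (wAux n (n - 1 - (j : ℕ)) / (n - (j : ℕ)).factorial)) := by ring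
      _ = _ := by rw [h1, h3]; ring
  rw [Finset.sum_congr rfl fun j _ => hterm j]
  rw [Fin.sum_univ_eq_sum_range (fun j => wAux n (n - 1 - j) / ((n - 1 - j) + 1).factorial)]
  rw [Finset.sum_range_reflect (fun k => wAux n k / ((k + 1).factorial : ℝ)) n]
  have hS := S_lemma n 0 (by omega)
  rw [if_pos rfl] at hS
  have : ∑ k ∈ range n, wAux n k / ((k + 1).factorial : ℝ)
      = 1 / (Nat.factorial 0) - (-1 : ℝ) ^ n := by
    rw [← hS]
    refine Finset.sum_congr rfl fun k hk => ?_
    unfold wAux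
    rw [mem_range] at hk
    rw [show (0 + k + 1) = k + 1 by omega]
    field_simp
  rw [this]
  rcases Nat.even_or_odd n with he | ho
  · rw [if_pos he, he.neg_one_pow]; norm_num
  · rw [if_neg (Nat.not_even_iff_odd.mpr ho), ho.neg_one_pow]; norm_num
end

section
/- Asymptotics for a hyperbolic Hamiltonian Jordan block: let λ ∈ ℂ with Re(λ) > 0, let 𝔍 = N_n(λ) ⊕ (−N_n(λ)^H) ∈ ℂ^{2n×2n}, let S = [[U₁, V₁],[U₂, V₂]] be symplectic with S^{-1} H S = 𝔍 for a Hamiltonian H, let W₀ be Hermitian and write [W₁; W₂] = S^{-1}[I; W₀]. Define [Q(t); P(t)] = exp(tH)[I; W₀]. If U₁ and W₁ are invertible, then as t → +∞: Q(t)^{-1} = O(e^{−Re(λ)t} t^{n−1}), and W(t) := P(t)Q(t)^{-1} satisfies W(t) = U₂U₁^{-1} + O(e^{−2Re(λ)t} t^{2(n−1)}); moreover U₂U₁^{-1} is Hermitian. -/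
open Matrix Filter Asymptotics

attribute [local instance] Matrix.normedAddCommGroup

/-- The `n×n` nilpotent Jordan block over `ℂ`. -/
def NmatC (n : ℕ) : Matrix (Fin n) (Fin n) ℂ :=
  Matrix.of fun i j => if (i : ℕ) + 1 = (j : ℕ) then 1 else 0

attribute [local instance] Matrix.normedSpace

lemma NmatC_pow (n k : ℕ) : (NmatC n ^ k) =
    Matrix.of fun i j : Fin n => if (i : ℕ) + k = (j : ℕ) then 1 else 0 := by
  induction k with
  | zero =>
    ext i j
    simp [Matrix.one_apply, Fin.ext_iff, eq_comm]
  | succ k ih =>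
    ext i j
    rw [pow_succ, ih, Matrix.mul_apply]
    simp only [Matrix.of_apply, NmatC]
    by_cases h : (i : ℕ) + k < n
    · rw [Finset.sum_eq_single (⟨(i : ℕ) + k, h⟩ : Fin n)]
      · simp [Nat.add_assoc]
      · intro b _ hb
        rw [if_neg, zero_mul]
        intro hc
        exact hb (Fin.ext hc.symm)
      · simp
    · rw [Finset.sum_eq_zero, if_neg (by omega)]
      intro b _
      rw [if_neg (by omega), zero_mul]

lemma NmatC_pow_eq_zero (n k : ℕ) (h : n ≤ k) : NmatC n ^ k = 0 := by
  ext i j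
  rw [NmatC_pow]
  simp only [Matrix.of_apply, Matrix.zero_apply, ite_eq_right_iff]
  intro hc
  omega

lemma matrix_norm_mul_le {N : ℕ} (A B : Matrix (Fin N) (Fin N) ℂ) :
    ‖A * B‖ ≤ N * ‖A‖ * ‖B‖ := by
  have hr : (0:ℝ) ≤ N * ‖A‖ * ‖B‖ := by positivity
  rw [Matrix.norm_le_iff hr]
  intro i j
  rw [Matrix.mul_apply]
  calc ‖∑ k, A i k * B k j‖ ≤ ∑ k, ‖A i k * B k j‖ := norm_sum_le _ _
    _ ≤ ∑ _k : Fin N, ‖A‖ * ‖B‖ := by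
        refine Finset.sum_le_sum fun k _ => ?_
        rw [norm_mul]
        exact mul_le_mul (Matrix.norm_entry_le_entrywise_sup_norm A)
          (Matrix.norm_entry_le_entrywise_sup_norm B) (norm_nonneg _) (norm_nonneg _)
    _ = N * ‖A‖ * ‖B‖ := by
        rw [Finset.sum_const, Finset.card_univ, Fintype.card_fin, nsmul_eq_mul, mul_assoc]

lemma isBigO_matrix_mul {N : ℕ} {f g : ℝ → Matrix (Fin N) (Fin N) ℂ} {p q : ℝ → ℝ}
    (hf : f =O[atTop] p) (hg : g =O[atTop] q) :
    (fun t => f t * g t) =O[atTop] fun t => p t * q t := by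
  have h1 : (fun t => f t * g t) =O[atTop] fun t => ‖f t‖ * ‖g t‖ := by
    refine IsBigO.of_bound N (Filter.Eventually.of_forall fun t => ?_)
    have := matrix_norm_mul_le (f t) (g t)
    rw [Real.norm_of_nonneg (by positivity)]
    calc ‖f t * g t‖ ≤ N * ‖f t‖ * ‖g t‖ := this
      _ = N * (‖f t‖ * ‖g t‖) := by ring
  exact h1.trans (hf.norm_left.mul hg.norm_left)

lemma isBigO_matrix_const_mul {N : ℕ} (C : Matrix (Fin N) (Fin N) ℂ)
    (f : ℝ → Matrix (Fin N) (Fin N) ℂ) :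
    (fun t => C * f t) =O[atTop] f := by
  refine IsBigO.of_bound (N * ‖C‖) (Filter.Eventually.of_forall fun t => ?_)
  calc ‖C * f t‖ ≤ N * ‖C‖ * ‖f t‖ := matrix_norm_mul_le _ _
    _ = N * ‖C‖ * ‖f t‖ := rfl

lemma isBigO_matrix_mul_const {N : ℕ} (C : Matrix (Fin N) (Fin N) ℂ)
    (f : ℝ → Matrix (Fin N) (Fin N) ℂ) :
    (fun t => f t * C) =O[atTop] f := by
  refine IsBigO.of_bound (N * ‖C‖) (Filter.Eventually.of_forall fun t => ?_)
  calc ‖f t * C‖ ≤ N * ‖f t‖ * ‖C‖ := matrix_norm_mul_le _ _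
    _ = N * ‖C‖ * ‖f t‖ := by ring

lemma expN_eq (N : ℕ) (z : ℂ) :
    NormedSpace.exp (z • NmatC N) =
      ∑ k ∈ Finset.range N, (z ^ k * (Nat.factorial k : ℂ)⁻¹) • NmatC N ^ k := by
  letI : SeminormedRing (Matrix (Fin N) (Fin N) ℂ) := Matrix.linftyOpSemiNormedRing
  letI : NormedRing (Matrix (Fin N) (Fin N) ℂ) := Matrix.linftyOpNormedRing
  letI : NormedAlgebra ℂ (Matrix (Fin N) (Fin N) ℂ) := Matrix.linftyOpNormedAlgebra
  rw [NormedSpace.exp_eq_tsum ℂ]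
  beta_reduce
  rw [tsum_eq_sum (s := Finset.range N)]
  · refine Finset.sum_congr rfl fun k _ => ?_
    rw [smul_pow, smul_smul, mul_comm]
  · intro k hk
    rw [smul_pow, NmatC_pow_eq_zero N k (by simpa using hk)]
    simp

lemma expN_norm_bound (N : ℕ) : ∃ C : ℝ, 0 ≤ C ∧ ∀ z : ℂ, 1 ≤ ‖z‖ →
    ‖NormedSpace.exp (z • NmatC N)‖ ≤ C * ‖z‖ ^ (N - 1) := by
  refine ⟨∑ k ∈ Finset.range N, (Nat.factorial k : ℝ)⁻¹ * ‖NmatC N ^ k‖, by positivity,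
    fun z hz => ?_⟩
  rw [expN_eq]
  calc ‖∑ k ∈ Finset.range N, (z ^ k * (Nat.factorial k : ℂ)⁻¹) • NmatC N ^ k‖
      ≤ ∑ k ∈ Finset.range N, ‖(z ^ k * (Nat.factorial k : ℂ)⁻¹) • NmatC N ^ k‖ :=
        norm_sum_le _ _
    _ ≤ ∑ k ∈ Finset.range N, ((Nat.factorial k : ℝ)⁻¹ * ‖NmatC N ^ k‖) * ‖z‖ ^ (N - 1) := by
        refine Finset.sum_le_sum fun k hk => ?_
        rw [norm_smul, norm_mul, norm_pow, norm_inv]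
        have h1 : ‖(Nat.factorial k : ℂ)‖ = (Nat.factorial k : ℝ) := by
          simpa using Complex.norm_natCast (Nat.factorial k)
        rw [h1]
        have h2 : ‖z‖ ^ k ≤ ‖z‖ ^ (N - 1) :=
          pow_le_pow_right₀ hz (by have := Finset.mem_range.mp hk; omega)
        calc ‖z‖ ^ k * (Nat.factorial k : ℝ)⁻¹ * ‖NmatC N ^ k‖
            ≤ ‖z‖ ^ (N-1) * (Nat.factorial k : ℝ)⁻¹ * ‖NmatC N ^ k‖ := by
              gcongr
          _ = ((Nat.factorial k : ℝ)⁻¹ * ‖NmatC N ^ k‖) * ‖z‖ ^ (N - 1) := by ring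
    _ = (∑ k ∈ Finset.range N, (Nat.factorial k : ℝ)⁻¹ * ‖NmatC N ^ k‖) * ‖z‖ ^ (N - 1) := by
        rw [Finset.sum_mul]

lemma expA_eq (N : ℕ) (lam z : ℂ) :
    NormedSpace.exp (z • (lam • (1 : Matrix (Fin N) (Fin N) ℂ) + NmatC N)) =
      Complex.exp (z * lam) • NormedSpace.exp (z • NmatC N) := by
  letI : SeminormedRing (Matrix (Fin N) (Fin N) ℂ) := Matrix.linftyOpSemiNormedRing
  letI : NormedRing (Matrix (Fin N) (Fin N) ℂ) := Matrix.linftyOpNormedRing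
  letI : NormedAlgebra ℂ (Matrix (Fin N) (Fin N) ℂ) := Matrix.linftyOpNormedAlgebra
  have h : z • (lam • (1 : Matrix (Fin N) (Fin N) ℂ) + NmatC N) =
      algebraMap ℂ (Matrix (Fin N) (Fin N) ℂ) (z * lam) + z • NmatC N := by
    rw [smul_add, smul_smul, Algebra.algebraMap_eq_smul_one]
  have hd : NormedSpace.exp (algebraMap ℂ (Matrix (Fin N) (Fin N) ℂ) (z * lam)) =
      Complex.exp (z * lam) • (1 : Matrix (Fin N) (Fin N) ℂ) := by
    rw [Matrix.algebraMap_eq_diagonal, Matrix.exp_diagonal, Matrix.smul_one_eq_diagonal]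
    congr 1
    funext i
    simp [Complex.exp_eq_exp_ℂ]
  rw [h, Matrix.exp_add_of_commute _ _ (Algebra.commute_algebraMap_left _ _),
    hd, smul_mul_assoc, one_mul]

lemma exp_fromBlocks {N : ℕ} (A B : Matrix (Fin N) (Fin N) ℂ) :
    NormedSpace.exp (Matrix.fromBlocks A 0 0 B) =
      Matrix.fromBlocks (NormedSpace.exp A) 0 0 (NormedSpace.exp B) := by
  letI : SeminormedRing (Matrix (Fin N) (Fin N) ℂ) := Matrix.linftyOpSemiNormedRing
  letI : NormedRing (Matrix (Fin N) (Fin N) ℂ) := Matrix.linftyOpNormedRing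
  letI : NormedAlgebra ℂ (Matrix (Fin N) (Fin N) ℂ) := Matrix.linftyOpNormedAlgebra
  letI : SeminormedRing (Matrix (Fin N ⊕ Fin N) (Fin N ⊕ Fin N) ℂ) :=
    Matrix.linftyOpSemiNormedRing
  letI : NormedRing (Matrix (Fin N ⊕ Fin N) (Fin N ⊕ Fin N) ℂ) := Matrix.linftyOpNormedRing
  letI : NormedAlgebra ℂ (Matrix (Fin N ⊕ Fin N) (Fin N ⊕ Fin N) ℂ) :=
    Matrix.linftyOpNormedAlgebra
  let f : Matrix (Fin N) (Fin N) ℂ × Matrix (Fin N) (Fin N) ℂ →+*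
      Matrix (Fin N ⊕ Fin N) (Fin N ⊕ Fin N) ℂ :=
    { toFun := fun p => Matrix.fromBlocks p.1 0 0 p.2
      map_one' := by simp [← Matrix.fromBlocks_one]
      map_mul' := fun p q => by
        simp [Matrix.fromBlocks_multiply]
      map_zero' := by simp [← Matrix.fromBlocks_zero]
      map_add' := fun p q => by simp [Matrix.fromBlocks_add] }
  have hcont : Continuous f :=
    Continuous.matrix_fromBlocks continuous_fst continuous_const continuous_const continuous_snd
  letI : NormedAlgebra ℚ (Matrix (Fin N) (Fin N) ℂ) := NormedAlgebra.restrictScalars ℚ ℂ _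
  haveI : @CompleteSpace (Matrix (Fin N) (Fin N) ℂ) (@PseudoMetricSpace.toUniformSpace _
      (@SeminormedRing.toPseudoMetricSpace _ Matrix.linftyOpSemiNormedRing)) := by
    letI : NormedAddCommGroup (Matrix (Fin N) (Fin N) ℂ) := Matrix.linftyOpNormedAddCommGroup
    letI : NormedSpace ℂ (Matrix (Fin N) (Fin N) ℂ) := Matrix.linftyOpNormedSpace
    exact FiniteDimensional.complete ℂ _
  have hmap := NormedSpace.map_exp f hcont (A, B)
  have hprod : NormedSpace.exp ((A, B) :
      Matrix (Fin N) (Fin N) ℂ × Matrix (Fin N) (Fin N) ℂ) =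
      (NormedSpace.exp A, NormedSpace.exp B) := by
    ext1
    · exact Prod.fst_exp (A, B)
    · exact Prod.snd_exp (A, B)
  have : f (A, B) = Matrix.fromBlocks A 0 0 B := rfl
  rw [this] at hmap
  exact (hmap.symm.trans (congrArg f hprod))

/-- Theorem 4.10 (hyperbolic Hamiltonian Jordan block, `t → +∞` direction): with
`𝔍 = N_n(λ) ⊕ (−N_n(λ)ᴴ)`, `Re λ > 0`, a symplectic `S = [[U₁,V₁],[U₂,V₂]]` such that
`S⁻¹ H S = 𝔍` for a Hamiltonian `H`, `W₀` Hermitian, `[W₁; W₂] = S⁻¹ [I; W₀]` and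
`[Q t; P t] = exp(tH) [I; W₀]`: if `U₁` and `W₁` are invertible, then as `t → ∞`,
`Q(t)⁻¹ = O(e^{−Re(λ)t} t^{n−1})` and
`P(t)Q(t)⁻¹ = U₂U₁⁻¹ + O(e^{−2Re(λ)t} t^{2(n−1)})`, with `U₂U₁⁻¹` Hermitian. -/
theorem riccati_asymptotics_hyperbolic_block {n : ℕ} (lam : ℂ) (hlam : 0 < lam.re)
    (H S : Matrix (Fin n ⊕ Fin n) (Fin n ⊕ Fin n) ℂ)
    (U₁ V₁ U₂ V₂ : Matrix (Fin n) (Fin n) ℂ)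
    (hSblk : S = Matrix.fromBlocks U₁ V₁ U₂ V₂)
    (hSsymp : S * Jmat n * Sᴴ = Jmat n)
    (hHham : H * Jmat n = (H * Jmat n)ᴴ)
    (hconj : S⁻¹ * H * S =
      Matrix.fromBlocks (lam • (1 : Matrix (Fin n) (Fin n) ℂ) + NmatC n) 0 0
        (-(lam • (1 : Matrix (Fin n) (Fin n) ℂ) + NmatC n)ᴴ))
    (W₀ : Matrix (Fin n) (Fin n) ℂ) (hW₀ : W₀.IsHermitian)
    (W₁ W₂ : Matrix (Fin n) (Fin n) ℂ)
    (hW : Matrix.fromRows W₁ W₂ = S⁻¹ * Matrix.fromRows 1 W₀)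
    (Q P : ℝ → Matrix (Fin n) (Fin n) ℂ)
    (hQP : ∀ t : ℝ, Matrix.fromRows (Q t) (P t) =
      NormedSpace.exp ((t : ℂ) • H) * Matrix.fromRows 1 W₀)
    (hU₁ : IsUnit U₁.det) (hW₁ : IsUnit W₁.det) :
    (fun t : ℝ => (Q t)⁻¹) =O[atTop]
      (fun t : ℝ => Real.exp (-lam.re * t) * t ^ (n - 1)) ∧
    (fun t : ℝ => P t * (Q t)⁻¹ - U₂ * U₁⁻¹) =O[atTop]
      (fun t : ℝ => Real.exp (-(2 * lam.re) * t) * t ^ (2 * (n - 1))) ∧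
    (U₂ * U₁⁻¹).IsHermitian := by
  classical
  -- invertibility of J and S
  set J' : Matrix (Fin n ⊕ Fin n) (Fin n ⊕ Fin n) ℂ := Matrix.fromBlocks 0 (-1) 1 0 with hJ'
  have hJJ' : Jmat n * J' = 1 := by
    simp [Jmat, hJ', Matrix.fromBlocks_multiply, ← Matrix.fromBlocks_one]
  have hJ'J : J' * Jmat n = 1 := by
    simp [Jmat, hJ', Matrix.fromBlocks_multiply, ← Matrix.fromBlocks_one]
  have hSright : S * (Jmat n * Sᴴ * J') = 1 := by
    calc S * (Jmat n * Sᴴ * J') = (S * Jmat n * Sᴴ) * J' := by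
          simp only [Matrix.mul_assoc]
      _ = 1 := by rw [hSsymp, hJJ']
  have hSdet : IsUnit S.det := Matrix.isUnit_det_of_right_inverse hSright
  have hS1 : S * S⁻¹ = 1 := Matrix.mul_nonsing_inv _ hSdet
  have hS2 : S⁻¹ * S = 1 := Matrix.nonsing_inv_mul _ hSdet
  set A : Matrix (Fin n) (Fin n) ℂ := lam • 1 + NmatC n with hA
  set 𝕁 : Matrix (Fin n ⊕ Fin n) (Fin n ⊕ Fin n) ℂ := Matrix.fromBlocks A 0 0 (-Aᴴ) with h𝕁
  have hconj' : S⁻¹ * H * S = 𝕁 := hconj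
  have hH : H = S * 𝕁 * S⁻¹ := by
    rw [← hconj']
    have h0 : S * (S⁻¹ * H * S) * S⁻¹ = ((S * S⁻¹) * H) * (S * S⁻¹) := by
      simp only [Matrix.mul_assoc]
    rw [h0, hS1, one_mul, mul_one]
  set E₁ : ℝ → Matrix (Fin n) (Fin n) ℂ := fun t => NormedSpace.exp ((t:ℂ) • A) with hE₁
  set E₂ : ℝ → Matrix (Fin n) (Fin n) ℂ := fun t => NormedSpace.exp ((t:ℂ) • (-Aᴴ)) with hE₂
  have hexpH : ∀ t : ℝ, NormedSpace.exp ((t:ℂ) • H) =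
      S * Matrix.fromBlocks (E₁ t) 0 0 (E₂ t) * S⁻¹ := by
    intro t
    have h1 : (t:ℂ) • H = S * ((t:ℂ) • 𝕁) * S⁻¹ := by
      rw [hH, mul_smul_comm, smul_mul_assoc]
    have h2 : (t:ℂ) • 𝕁 = Matrix.fromBlocks ((t:ℂ) • A) 0 0 ((t:ℂ) • (-Aᴴ)) := by
      rw [h𝕁, Matrix.fromBlocks_smul]
      simp
    rw [h1, Matrix.exp_conj S _ ((Matrix.isUnit_iff_isUnit_det S).mpr hSdet), h2,
      exp_fromBlocks]
  have hRW : S * Matrix.fromRows W₁ W₂ = Matrix.fromRows 1 W₀ := by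
    rw [hW]; exact Matrix.mul_nonsing_inv_cancel_left _ _ hSdet
  have hforms : ∀ t : ℝ, Q t = U₁ * E₁ t * W₁ + V₁ * E₂ t * W₂ ∧
      P t = U₂ * E₁ t * W₁ + V₂ * E₂ t * W₂ := by
    intro t
    have h := hQP t
    rw [hexpH t, ← hRW] at h
    have h2 : S * Matrix.fromBlocks (E₁ t) 0 0 (E₂ t) * S⁻¹ * (S * Matrix.fromRows W₁ W₂)
        = Matrix.fromRows (U₁ * E₁ t * W₁ + V₁ * E₂ t * W₂)
            (U₂ * E₁ t * W₁ + V₂ * E₂ t * W₂) := by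
      calc S * Matrix.fromBlocks (E₁ t) 0 0 (E₂ t) * S⁻¹ * (S * Matrix.fromRows W₁ W₂)
          = S * Matrix.fromBlocks (E₁ t) 0 0 (E₂ t) * ((S⁻¹ * S) * Matrix.fromRows W₁ W₂) := by
            simp only [Matrix.mul_assoc]
        _ = (Matrix.fromBlocks U₁ V₁ U₂ V₂) * Matrix.fromBlocks (E₁ t) 0 0 (E₂ t) *
              Matrix.fromRows W₁ W₂ := by
            rw [hS2, Matrix.one_mul, ← hSblk]
        _ = Matrix.fromBlocks (U₁ * E₁ t) (V₁ * E₂ t) (U₂ * E₁ t) (V₂ * E₂ t) *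
              Matrix.fromRows W₁ W₂ := by
            rw [Matrix.fromBlocks_multiply]
            simp
        _ = _ := by rw [Matrix.fromBlocks_mul_fromRows]
    replace h := h.trans h2
    exact Matrix.fromRows_inj h
  obtain ⟨C, hC0, hC⟩ := expN_norm_bound n
  set g : ℝ → ℝ := fun t => Real.exp (-lam.re * t) * t ^ (n - 1) with hg
  have hE₁inv_eq : ∀ t : ℝ, (E₁ t)⁻¹ =
      Complex.exp (((-t : ℝ) : ℂ) * lam) • NormedSpace.exp (((-t : ℝ) : ℂ) • NmatC n) := by
    intro t
    have h0 : (((-t : ℝ)) : ℂ) • A = -((t : ℂ) • A) := by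
      push_cast
      rw [neg_smul]
    have h1 : (E₁ t)⁻¹ = NormedSpace.exp ((((-t : ℝ)) : ℂ) • A) := by
      simp only [hE₁]
      rw [h0, Matrix.exp_neg]
    rw [h1, hA, expA_eq]
  have hE₂_eq : ∀ t : ℝ, E₂ t =
      (Complex.exp (((-t : ℝ) : ℂ) * lam) • NormedSpace.exp (((-t : ℝ) : ℂ) • NmatC n))ᴴ := by
    intro t
    have h1 : (t:ℂ) • (-Aᴴ) = ((((-t : ℝ)) : ℂ) • A)ᴴ := by
      rw [Matrix.conjTranspose_smul]
      push_cast
      rw [star_neg, neg_smul, smul_neg]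
      simp [Complex.star_def, Complex.conj_ofReal]
    simp only [hE₂]
    rw [h1, Matrix.exp_conjTranspose, hA, expA_eq]
  have hnorm1 : ∀ t : ℝ, 1 ≤ t →
      ‖Complex.exp (((-t : ℝ) : ℂ) * lam) • NormedSpace.exp (((-t : ℝ) : ℂ) • NmatC n)‖
        ≤ C * (Real.exp (-lam.re * t) * t ^ (n - 1)) := by
    intro t ht
    have ht0 : (0:ℝ) ≤ t := le_trans zero_le_one ht
    rw [norm_smul]
    have hzn : ‖((-t : ℝ) : ℂ)‖ = t := by
      rw [Complex.norm_real, Real.norm_eq_abs, abs_neg, abs_of_nonneg ht0]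
    have habs : ‖Complex.exp (((-t : ℝ) : ℂ) * lam)‖ = Real.exp (-lam.re * t) := by
      rw [Complex.norm_exp]
      congr 1
      simp only [Complex.mul_re, Complex.ofReal_re, Complex.ofReal_im, zero_mul, sub_zero]
      ring
    have hb := hC (((-t : ℝ) : ℂ)) (by rw [hzn]; exact ht)
    rw [hzn] at hb
    rw [habs]
    calc Real.exp (-lam.re * t) * ‖NormedSpace.exp (((-t : ℝ) : ℂ) • NmatC n)‖
        ≤ Real.exp (-lam.re * t) * (C * t ^ (n - 1)) :=
          mul_le_mul_of_nonneg_left hb (Real.exp_pos _).le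
      _ = C * (Real.exp (-lam.re * t) * t ^ (n - 1)) := by ring
  have hgnn : ∀ t : ℝ, 1 ≤ t → ‖g t‖ = g t := by
    intro t ht
    exact Real.norm_of_nonneg
      (mul_nonneg (Real.exp_pos _).le (pow_nonneg (by linarith) _))
  have hE₁invO : (fun t => (E₁ t)⁻¹) =O[atTop] g := by
    refine IsBigO.of_bound C ?_
    filter_upwards [eventually_ge_atTop 1] with t ht
    rw [hE₁inv_eq t, hgnn t ht]
    exact hnorm1 t ht
  have hE₂O : E₂ =O[atTop] g := by
    refine IsBigO.of_bound C ?_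
    filter_upwards [eventually_ge_atTop 1] with t ht
    rw [hE₂_eq t, Matrix.norm_conjTranspose, hgnn t ht]
    exact hnorm1 t ht
  have hE₁unit : ∀ t : ℝ, IsUnit (E₁ t).det := fun t =>
    (Matrix.isUnit_iff_isUnit_det _).mp (Matrix.isUnit_exp _)
  set Kf : ℝ → Matrix (Fin n) (Fin n) ℂ := fun t => W₁⁻¹ * (E₁ t)⁻¹ * U₁⁻¹ with hKf
  set Gf : ℝ → Matrix (Fin n) (Fin n) ℂ := fun t => V₁ * E₂ t * W₂ with hGf
  have hQeq : ∀ t : ℝ, Q t = (U₁ * E₁ t * W₁) * (1 + Kf t * Gf t) := by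
    intro t
    have hMK : (U₁ * E₁ t * W₁) * Kf t = 1 := by
      simp only [hKf]
      simp only [Matrix.mul_assoc]
      rw [Matrix.mul_nonsing_inv_cancel_left _ _ hW₁,
        Matrix.mul_nonsing_inv_cancel_left _ _ (hE₁unit t), Matrix.mul_nonsing_inv _ hU₁]
    calc Q t = U₁ * E₁ t * W₁ + Gf t := by rw [(hforms t).1]
      _ = (U₁ * E₁ t * W₁) * (1 + Kf t * Gf t) := by
          rw [mul_add, mul_one, ← Matrix.mul_assoc, hMK, one_mul]
  have hQinv : ∀ t : ℝ, (Q t)⁻¹ = (1 + Kf t * Gf t)⁻¹ * Kf t := by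
    intro t
    rw [hQeq t, Matrix.mul_inv_rev]
    congr 1
    rw [Matrix.mul_inv_rev, Matrix.mul_inv_rev]
    simp only [hKf, Matrix.mul_assoc]
  have hKO : Kf =O[atTop] g := by
    rw [hKf]
    exact ((isBigO_matrix_mul_const U₁⁻¹ fun t => W₁⁻¹ * (E₁ t)⁻¹).trans
      (isBigO_matrix_const_mul W₁⁻¹ fun t => (E₁ t)⁻¹)).trans hE₁invO
  have hGO : Gf =O[atTop] g := by
    rw [hGf]
    exact ((isBigO_matrix_mul_const W₂ fun t => V₁ * E₂ t).trans
      (isBigO_matrix_const_mul V₁ E₂)).trans hE₂O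
  have hKGO : (fun t => Kf t * Gf t) =O[atTop] (fun t => g t * g t) :=
    isBigO_matrix_mul hKO hGO
  have hg0 : Tendsto g atTop (nhds 0) := by
    have hrt : Tendsto (fun t : ℝ => lam.re * t) atTop atTop :=
      Tendsto.const_mul_atTop hlam tendsto_id
    have h1 : Tendsto (fun t : ℝ => (lam.re * t) ^ (n-1) * Real.exp (-(lam.re * t)))
        atTop (nhds 0) := (Real.tendsto_pow_mul_exp_neg_atTop_nhds_zero (n-1)).comp hrt
    have h2 := h1.const_mul ((lam.re ^ (n-1))⁻¹)
    rw [mul_zero] at h2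
    refine h2.congr fun t => ?_
    have hrne : lam.re ^ (n-1) ≠ 0 := pow_ne_zero _ (ne_of_gt hlam)
    simp only [hg, mul_pow, neg_mul]
    field_simp
  have hgg0 : Tendsto (fun t => g t * g t) atTop (nhds 0) := by
    simpa using hg0.mul hg0
  have hKG0 : Tendsto (fun t => Kf t * Gf t) atTop (nhds 0) := hKGO.trans_tendsto hgg0
  have h1E : Tendsto (fun t => 1 + Kf t * Gf t) atTop
      (nhds (1 : Matrix (Fin n) (Fin n) ℂ)) := by
    have := (tendsto_const_nhds :
      Tendsto (fun _ : ℝ => (1 : Matrix (Fin n) (Fin n) ℂ)) atTop (nhds 1)).add hKG0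
    simpa using this
  have hdet1 : Tendsto (fun t => (1 + Kf t * Gf t).det) atTop (nhds 1) := by
    have hcd : Continuous fun M : Matrix (Fin n) (Fin n) ℂ => M.det :=
      continuous_id.matrix_det
    have := (hcd.tendsto _).comp h1E
    simpa [Function.comp_def] using this
  have hadj1 : Tendsto (fun t => (1 + Kf t * Gf t).adjugate) atTop
      (nhds (1 : Matrix (Fin n) (Fin n) ℂ)) := by
    have hca : Continuous fun M : Matrix (Fin n) (Fin n) ℂ => M.adjugate :=
      continuous_id.matrix_adjugate
    have := (hca.tendsto _).comp h1E
    simpa [Function.comp_def] using this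
  have hinv1 : Tendsto (fun t => (1 + Kf t * Gf t)⁻¹) atTop
      (nhds (1 : Matrix (Fin n) (Fin n) ℂ)) := by
    have heq : (fun t => (1 + Kf t * Gf t)⁻¹) =
        fun t => Ring.inverse ((1 + Kf t * Gf t).det) • (1 + Kf t * Gf t).adjugate :=
      funext fun t => Matrix.inv_def _
    rw [heq]
    have hri : Tendsto (fun t => Ring.inverse ((1 + Kf t * Gf t).det)) atTop (nhds 1) := by
      rw [Ring.inverse_eq_inv']
      simpa using hdet1.inv₀ one_ne_zero
    have := hri.smul hadj1
    simpa using this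
  have hinvO : (fun t => (1 + Kf t * Gf t)⁻¹) =O[atTop] (fun _ : ℝ => (1:ℝ)) :=
    hinv1.isBigO_one ℝ
  have hQinvO : (fun t : ℝ => (Q t)⁻¹) =O[atTop] g := by
    have h := isBigO_matrix_mul hinvO hKO
    have heq : (fun t : ℝ => (Q t)⁻¹) = fun t => (1 + Kf t * Gf t)⁻¹ * Kf t := funext hQinv
    rw [heq]
    simpa only [one_mul] using h
  have hdetU : ∀ᶠ t in atTop, IsUnit (1 + Kf t * Gf t).det :=
    (hdet1.eventually_ne one_ne_zero).mono fun t ht => isUnit_iff_ne_zero.mpr ht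
  have hQQ : ∀ᶠ t in atTop, Q t * (Q t)⁻¹ = 1 := by
    filter_upwards [hdetU] with t ht
    have hQdet : IsUnit (Q t).det := by
      rw [hQeq t, Matrix.det_mul, Matrix.det_mul, Matrix.det_mul]
      exact ((hU₁.mul (hE₁unit t)).mul hW₁).mul ht
    exact Matrix.mul_nonsing_inv _ hQdet
  have heven : ∀ᶠ t in atTop,
      P t * (Q t)⁻¹ - U₂ * U₁⁻¹ = (V₂ * E₂ t * W₂ - U₂ * U₁⁻¹ * Gf t) * (Q t)⁻¹ := by
    filter_upwards [hQQ] with t ht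
    have hPt : P t = U₂ * U₁⁻¹ * Q t + (V₂ * E₂ t * W₂ - U₂ * U₁⁻¹ * Gf t) := by
      rw [(hforms t).2, (hforms t).1]
      have h3 : U₂ * E₁ t * W₁ = U₂ * U₁⁻¹ * (U₁ * E₁ t * W₁) := by
        calc U₂ * E₁ t * W₁ = U₂ * (E₁ t * W₁) := by rw [Matrix.mul_assoc]
          _ = U₂ * (U₁⁻¹ * (U₁ * (E₁ t * W₁))) := by
              rw [Matrix.nonsing_inv_mul_cancel_left _ _ hU₁]
          _ = U₂ * U₁⁻¹ * (U₁ * E₁ t * W₁) := by simp only [Matrix.mul_assoc]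
      rw [h3]
      simp only [hGf]
      rw [mul_add]
      abel
    rw [hPt, add_mul, Matrix.mul_assoc, ht, mul_one]
    exact add_sub_cancel_left _ _
  have hrem : (fun t => V₂ * E₂ t * W₂ - U₂ * U₁⁻¹ * Gf t) =O[atTop] g := by
    have h1 : (fun t => V₂ * E₂ t * W₂) =O[atTop] g :=
      ((isBigO_matrix_mul_const W₂ fun t => V₂ * E₂ t).trans
        (isBigO_matrix_const_mul V₂ E₂)).trans hE₂O
    have h2 : (fun t => U₂ * U₁⁻¹ * Gf t) =O[atTop] g :=
      (isBigO_matrix_const_mul (U₂ * U₁⁻¹) Gf).trans hGO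
    exact h1.sub h2
  have hprod : (fun t => (V₂ * E₂ t * W₂ - U₂ * U₁⁻¹ * Gf t) * (Q t)⁻¹) =O[atTop]
      (fun t => g t * g t) := isBigO_matrix_mul hrem hQinvO
  have hggeq : (fun t => g t * g t) =
      fun t : ℝ => Real.exp (-(2 * lam.re) * t) * t ^ (2 * (n - 1)) := by
    funext t
    simp only [hg]
    have h : -(2 * lam.re) * t = (-lam.re * t) + (-lam.re * t) := by ring
    rw [h, Real.exp_add, two_mul, pow_add]
    ring
  rw [hggeq] at hprod
  have hsecond : (fun t : ℝ => P t * (Q t)⁻¹ - U₂ * U₁⁻¹) =O[atTop]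
      fun t : ℝ => Real.exp (-(2 * lam.re) * t) * t ^ (2 * (n - 1)) :=
    Filter.EventuallyEq.trans_isBigO heven hprod
  -- Hermitian part
  have hleft : (Jmat n * Sᴴ * J') * S = 1 := mul_eq_one_comm.mp hSright
  have hSJS : Sᴴ * J' * S = J' := by
    have h2 := congrArg (fun X => J' * X) hleft
    simp only [mul_one] at h2
    have h3 : J' * (Jmat n * Sᴴ * J' * S) = Sᴴ * J' * S := by
      calc J' * (Jmat n * Sᴴ * J' * S) = ((J' * Jmat n) * Sᴴ) * (J' * S) := by
            simp only [Matrix.mul_assoc]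
        _ = Sᴴ * (J' * S) := by rw [hJ'J, Matrix.one_mul]
        _ = Sᴴ * J' * S := by rw [Matrix.mul_assoc]
    rw [← h3]
    exact h2
  have hJ'neg : J' = -(Jmat n) := by
    rw [hJ', Jmat, Matrix.fromBlocks_neg]
    norm_num
  have hJS : Sᴴ * Jmat n * S = Jmat n := by
    rw [hJ'neg] at hSJS
    have h := hSJS
    rw [Matrix.mul_neg, Matrix.neg_mul] at h
    exact neg_inj.mp h
  have hblk : U₂ᴴ * U₁ = U₁ᴴ * U₂ := by
    have h := hJS
    rw [hSblk, Matrix.fromBlocks_conjTranspose] at h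
    rw [Jmat, Matrix.fromBlocks_multiply, Matrix.fromBlocks_multiply] at h
    have h11 := congrArg Matrix.toBlocks₁₁ h
    simp only [Matrix.toBlocks_fromBlocks₁₁] at h11
    simp only [Matrix.mul_zero, Matrix.zero_mul, Matrix.mul_one, Matrix.mul_neg,
      Matrix.neg_mul, Matrix.one_mul, zero_add, add_zero] at h11
    -- h11 : -(U₂ᴴ * U₁) + U₁ᴴ * U₂ = 0
    have h12 : U₁ᴴ * U₂ = U₂ᴴ * U₁ := by
      rwa [neg_add_eq_sub, sub_eq_zero] at h11
    exact h12.symm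
  have hherm : (U₂ * U₁⁻¹).IsHermitian := by
    have hU₁H : IsUnit U₁ᴴ.det := by
      rw [Matrix.det_conjTranspose]
      exact hU₁.star
    show (U₂ * U₁⁻¹)ᴴ = U₂ * U₁⁻¹
    rw [Matrix.conjTranspose_mul, Matrix.conjTranspose_nonsing_inv]
    have key : U₂ᴴ = U₁ᴴ * (U₂ * U₁⁻¹) := by
      calc U₂ᴴ = U₂ᴴ * (U₁ * U₁⁻¹) := by rw [Matrix.mul_nonsing_inv _ hU₁, mul_one]
        _ = (U₂ᴴ * U₁) * U₁⁻¹ := by rw [Matrix.mul_assoc]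
        _ = (U₁ᴴ * U₂) * U₁⁻¹ := by rw [hblk]
        _ = U₁ᴴ * (U₂ * U₁⁻¹) := by rw [Matrix.mul_assoc]
    rw [key, Matrix.nonsing_inv_mul_cancel_left _ _ hU₁H]
  exact ⟨hQinvO, hsecond, hherm⟩
end
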